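/- arXiv:0903.2100 — 10 statements merged into one kernel-verified Lean document; each statement's English description precedes it below -/
import Mathlib

section
/- Let E be a finite set and P a set of partitions of E. A set Br of subsets of E is a P-bramble if and only if it is a P↑-bramble, where P↑ is the closure of P under merging of partitions. -/
open Set

variable {E : Type*}

/-- A partition of `E`: pairwise disjoint nonempty parts covering `E`. -/
def IsPartitionOf (μ : Set (Set E)) : Prop :=
  (∀ A ∈ μ, A.Nonempty) ∧ μ.PairwiseDisjoint id ∧ ⋃₀ μ = Set.univ

/-- The least superset of `P` closed under merging of partitions:
from `(α|A)` and `(Aᶜ|β)` one obtains `(α|β)`. -/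
inductive MergeClosure (P : Set (Set (Set E))) : Set (Set E) → Prop
  | base {μ : Set (Set E)} : μ ∈ P → MergeClosure P μ
  | merge {α β : Set (Set E)} {A : Set E} (hA : A ∉ α) (hB : Aᶜ ∉ β) :
      MergeClosure P (insert A α) → MergeClosure P (insert Aᶜ β) →
      MergeClosure P (α ∪ β)

/-- A `Q`-bramble: pairwise intersecting sets meeting every partition in `Q`. -/
def IsBramble (Q : Set (Set (Set E))) (Br : Set (Set E)) : Prop :=
  (∀ X ∈ Br, ∀ Y ∈ Br, (X ∩ Y).Nonempty) ∧ ∀ μ ∈ Q, ∃ X ∈ μ, X ∈ Br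

/-- Deletion: remove one element from one member, dropping it if it becomes empty. -/
def DelStep (β α : Set (Set E)) : Prop :=
  ∃ B ∈ β, ∃ b ∈ B, α = (β \ {B}) ∪ {X | X = B \ {b} ∧ X.Nonempty}

/-- Partition step: replace one member by a partition of it. -/
def SplitStep (β α : Set (Set E)) : Prop :=
  ∃ B ∈ β, ∃ δ : Set (Set E), (∀ D ∈ δ, D.Nonempty) ∧ δ.PairwiseDisjoint id ∧
    ⋃₀ δ = B ∧ α = (β \ {B}) ∪ δ

/-- `α` is finer than `β`: obtained by a sequence of deletions and partitions. -/
def Finer (α β : Set (Set E)) : Prop :=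
  Relation.ReflTransGen (fun x y => DelStep x y ∨ SplitStep x y) β α

/-- `α` is strongly finer than `β`: obtained by deletions only. -/
def StronglyFiner (α β : Set (Set E)) : Prop :=
  Relation.ReflTransGen DelStep β α

/-- A family of small sets: downward closed. -/
def DownClosed (S : Set (Set E)) : Prop := ∀ X ∈ S, ∀ Y, Y ⊆ X → Y ∈ S

def Refining (Q : Set (Set (Set E))) : Prop :=
  ∀ (α β : Set (Set E)) (A B : Set E), A ∉ α → B ∉ β →
    insert A α ∈ Q → insert B β ∈ Q → A ∩ B = ∅ →
    ∃ μ ∈ Q, Finer μ (α ∪ β)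

def Dualising (Q : Set (Set (Set E))) : Prop :=
  ∀ S : Set (Set E), DownClosed S →
    (∃ μ ∈ Q, ∀ X ∈ μ, X ∈ S) ∨ (∃ Br, IsBramble Q Br ∧ ∀ X ∈ Br, X ∉ S)

/-- `α∖F`: remove the elements of `F` from every part, discarding emptied parts. -/
def RemoveF (α : Set (Set E)) (F : Set E) : Set (Set E) :=
  {X | ∃ A ∈ α, X = A \ F ∧ X.Nonempty}

def Pushing (P : Set (Set (Set E))) : Prop :=
  ∀ (α β : Set (Set E)) (A B : Set E), A ∉ α → B ∉ β →
    insert A α ∈ P → insert B β ∈ P → (Aᶜ ∩ Bᶜ).Nonempty →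
    ∃ F : Set E, F.Nonempty ∧ F ⊆ Aᶜ ∩ Bᶜ ∧
      (insert (A ∪ F) (RemoveF α F) ∈ P ∨ insert (B ∪ F) (RemoveF β F) ∈ P)

/-- Weakly submodular partition function (new sense). -/
def WeaklySubmodular (Ψ : Set (Set E) → EReal) : Prop :=
  ∀ (α β : Set (Set E)) (A B : Set E), A ∉ α → B ∉ β →
    IsPartitionOf (insert A α) → IsPartitionOf (insert B β) →
    (Aᶜ ∩ Bᶜ).Nonempty →
    ∃ F : Set E, F.Nonempty ∧ F ⊆ Aᶜ ∩ Bᶜ ∧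
      (Ψ (insert (A ∪ F) (RemoveF α F)) ≤ Ψ (insert A α) ∨
       Ψ (insert (B ∪ F) (RemoveF β F)) ≤ Ψ (insert B β))

/-- Submodular partition function. -/
def SubmodularPF (Ψ : Set (Set E) → EReal) : Prop :=
  ∀ (α β : Set (Set E)) (A B : Set E), A ∉ α → B ∉ β →
    IsPartitionOf (insert A α) → IsPartitionOf (insert B β) →
    Ψ (insert (A ∪ Bᶜ) (RemoveF α Bᶜ)) + Ψ (insert (B ∪ Aᶜ) (RemoveF β Aᶜ))
      ≤ Ψ (insert A α) + Ψ (insert B β)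

/-- The overlap: elements belonging to at least two members. -/
def Overlap (α : Set (Set E)) : Set E :=
  {x | ∃ X ∈ α, ∃ Y ∈ α, X ≠ Y ∧ x ∈ X ∧ x ∈ Y}

/-- A connectivity function: symmetric and submodular. -/
def ConnFn (f : Set E → EReal) : Prop :=
  (∀ X, f X = f Xᶜ) ∧ ∀ X Y, f (X ∪ Y) + f (X ∩ Y) ≤ f X + f Y

/-- The partition function `max_f`. -/
noncomputable def maxPF (f : Set E → EReal) (μ : Set (Set E)) : EReal := sSup (f '' μ)

/-- `Br` is a `P`-bramble iff it is a `P↑`-bramble. -/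
theorem bramble_iff_mergeClosure_bramble [Finite E]
    (P : Set (Set (Set E))) (hP : ∀ μ ∈ P, IsPartitionOf μ) (Br : Set (Set E)) :
    IsBramble P Br ↔ IsBramble {μ | MergeClosure P μ} Br := by
  constructor
  · rintro ⟨hint, hmeet⟩
    refine ⟨hint, ?_⟩
    intro μ hμ
    induction hμ with
    | base h => exact hmeet _ h
    | merge hA hB h1 h2 ih1 ih2 =>
      obtain ⟨X, hX, hXBr⟩ := ih1
      obtain ⟨Y, hY, hYBr⟩ := ih2
      rcases hX with rfl | hX
      · rcases hY with rfl | hY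
        · exfalso
          obtain ⟨x, hx1, hx2⟩ := hint _ hXBr _ hYBr
          exact hx2 hx1
        · exact ⟨Y, Or.inr hY, hYBr⟩
      · exact ⟨X, Or.inl hX, hXBr⟩
  · rintro ⟨hint, hmeet⟩
    exact ⟨hint, fun μ hμ => hmeet μ (MergeClosure.base hμ)⟩
end

section
/- If a set Q of partitions of a finite set E is refining, then Q is dualising: for every set S of small sets (a subset of the powerset of E closed under taking subsets), either Q contains a partition all of whose parts are in S, or there exists a Q-bramble none of whose elements is in S. -/
open Set

variable {E : Type*}

namespace RefDual

/-- `P` is a "good" part of `σ` w.r.t. small sets `S` and constraint family `T`: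
it is a big part meeting every member of `T`. -/
def Good (S T σ : Set (Set E)) (P : Set E) : Prop :=
  P ∈ σ ∧ P ∉ S ∧ ∀ t ∈ T, (P ∩ t).Nonempty

def Aligned (S T ρ : Set (Set E)) (P₀ Z : Set E) : Prop :=
  ∃ P', Good S T ρ P' ∧ P' ≠ P₀ ∧ Z ⊆ P'

/-- Union of non-aligned good parts. -/
def NAU (S T ρ : Set (Set E)) (P₀ : Set E) (κ : Set (Set E)) : Set E :=
  ⋃₀ {Z | Good S T κ Z ∧ ¬ Aligned S T ρ P₀ Z}

/-- Union of good parts. -/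
def GU (S T ρ : Set (Set E)) : Set E := ⋃₀ {Z | Good S T ρ Z}

lemma step_refines {x y : Set (Set E)} (h : DelStep x y ∨ SplitStep x y) :
    ∀ z ∈ y, ∃ w ∈ x, z ⊆ w := by
  intro z hz
  rcases h with ⟨B, hB, b, _, rfl⟩ | ⟨B, hB, δ, _, _, hUnion, rfl⟩
  · rcases hz with hz | hz
    · exact ⟨z, hz.1, subset_rfl⟩
    · exact ⟨B, hB, by rw [hz.1]; exact diff_subset⟩
  · rcases hz with hz | hz
    · exact ⟨z, hz.1, subset_rfl⟩
    · exact ⟨B, hB, by rw [← hUnion]; exact subset_sUnion_of_mem hz⟩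

lemma finer_refines {a b : Set (Set E)} (h : Finer a b) : ∀ z ∈ a, ∃ w ∈ b, z ⊆ w := by
  unfold Finer at h
  induction h with
  | refl => exact fun z hz => ⟨z, hz, subset_rfl⟩
  | tail _ hstep ih =>
    intro z hz
    obtain ⟨w, hw, hzw⟩ := step_refines hstep z hz
    obtain ⟨w', hw', hww'⟩ := ih w hw
    exact ⟨w', hw', hzw.trans hww'⟩

lemma merge {Q : Set (Set (Set E))} (h : Refining Q) {μ μ' : Set (Set E)} {A B : Set E}
    (hμ : μ ∈ Q) (hμ' : μ' ∈ Q) (hA : A ∈ μ) (hB : B ∈ μ') (hAB : A ∩ B = ∅) :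
    ∃ ν ∈ Q, ∀ z ∈ ν, ∃ w ∈ (μ \ {A}) ∪ (μ' \ {B}), z ⊆ w := by
  obtain ⟨ν, hν, hfin⟩ := h (μ \ {A}) (μ' \ {B}) A B (fun hy => hy.2 rfl) (fun hy => hy.2 rfl)
      (by rwa [Set.insert_diff_singleton, Set.insert_eq_self.2 hA])
      (by rwa [Set.insert_diff_singleton, Set.insert_eq_self.2 hB]) hAB
  exact ⟨ν, hν, finer_refines hfin⟩

lemma good_up (S : Set (Set E)) (hS : DownClosed S) {T σ σ' : Set (Set E)} {z w : Set E}
    (hz : Good S T σ z) (hw : w ∈ σ') (hzw : z ⊆ w) : Good S T σ' w :=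
  ⟨hw, fun hwS => hz.2.1 (hS w hwS z hzw),
    fun t ht => (hz.2.2 t ht).mono (inter_subset_inter_left t hzw)⟩

variable [Finite E] {Q : Set (Set (Set E))} {S : Set (Set E)}

lemma evac (hQ : ∀ μ ∈ Q, IsPartitionOf μ) (h : Refining Q) (hS : DownClosed S)
    (T : Set (Set E)) {ρ : Set (Set E)} (hρ : ρ ∈ Q) {P₀ : Set E} (hP₀ : P₀ ∈ ρ) :
    ∀ (n : ℕ) (κ : Set (Set E)), κ ∈ Q → (∀ Z, Good S T κ Z → Z ∩ P₀ = ∅) →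
      (NAU S T ρ P₀ κ).ncard = n →
      ∃ κ' ∈ Q, ∀ Z, Good S T κ' Z → Aligned S T ρ P₀ Z := by
  intro n
  induction n using Nat.strong_induction_on with
  | _ n ih =>
    intro κ hκ hinv hm
    by_cases hall : ∀ Z, Good S T κ Z → Aligned S T ρ P₀ Z
    · exact ⟨κ, hκ, hall⟩
    · push_neg at hall
      obtain ⟨Z₀, hZ₀g, hZ₀na⟩ := hall
      obtain ⟨κ₁, hκ₁, href⟩ := merge h hκ hρ hZ₀g.1 hP₀ (hinv Z₀ hZ₀g)
      have hinv₁ : ∀ Z, Good S T κ₁ Z → Z ∩ P₀ = ∅ := by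
        intro Z hZ
        obtain ⟨w, hw, hzw⟩ := href Z hZ.1
        rcases hw with hw | hw
        · have hwg : Good S T κ w := good_up S hS hZ hw.1 hzw
          have hempty := hinv w hwg
          exact Set.subset_empty_iff.mp (hempty ▸ inter_subset_inter_left P₀ hzw)
        · have hne : w ≠ P₀ := fun he => hw.2 (by rw [he]; rfl)
          have hd : Disjoint w P₀ := (hQ ρ hρ).2.1 hw.1 hP₀ hne
          exact Set.subset_empty_iff.mp
            ((Set.disjoint_iff_inter_eq_empty.mp hd) ▸ inter_subset_inter_left P₀ hzw)
      have hsub : NAU S T ρ P₀ κ₁ ⊆ NAU S T ρ P₀ κ \ Z₀ := by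
        intro x hx
        obtain ⟨Z, ⟨hZg, hZna⟩, hxZ⟩ := hx
        obtain ⟨w, hw, hzw⟩ := href Z hZg.1
        rcases hw with hw | hw
        · have hwg : Good S T κ w := good_up S hS hZg hw.1 hzw
          have hwna : ¬ Aligned S T ρ P₀ w := by
            rintro ⟨P', hP', hne, hsub'⟩
            exact hZna ⟨P', hP', hne, hzw.trans hsub'⟩
          refine ⟨⟨w, ⟨hwg, hwna⟩, hzw hxZ⟩, ?_⟩
          intro hxZ₀
          have hne : w ≠ Z₀ := fun he => hw.2 (by rw [he]; rfl)
          have hd : Disjoint w Z₀ := (hQ κ hκ).2.1 hw.1 hZ₀g.1 hne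
          exact Set.disjoint_left.mp hd (hzw hxZ) hxZ₀
        · have hwg : Good S T ρ w := good_up S hS hZg hw.1 hzw
          have hne : w ≠ P₀ := fun he => hw.2 (by rw [he]; rfl)
          exact absurd ⟨w, hwg, hne, hzw⟩ hZna
      obtain ⟨x₀, hx₀⟩ : Z₀.Nonempty := (hQ κ hκ).1 Z₀ hZ₀g.1
      have hZ₀U : Z₀ ⊆ NAU S T ρ P₀ κ := subset_sUnion_of_mem ⟨hZ₀g, hZ₀na⟩
      have hss : NAU S T ρ P₀ κ \ Z₀ ⊂ NAU S T ρ P₀ κ := by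
        constructor
        · exact diff_subset
        · intro hcon
          exact (hcon (hZ₀U hx₀)).2 hx₀
      have hlt : (NAU S T ρ P₀ κ₁).ncard < n := by
        calc (NAU S T ρ P₀ κ₁).ncard
            ≤ (NAU S T ρ P₀ κ \ Z₀).ncard := Set.ncard_le_ncard hsub (Set.toFinite _)
          _ < (NAU S T ρ P₀ κ).ncard := Set.ncard_lt_ncard hss (Set.toFinite _)
          _ = n := hm
      exact ih _ hlt κ₁ hκ₁ hinv₁ rfl

lemma no_doomed (hQ : ∀ μ ∈ Q, IsPartitionOf μ) (h : Refining Q) (hS : DownClosed S)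
    {T : Set (Set E)} (hINV : ∀ σ ∈ Q, ∃ P, Good S T σ P) :
    ∀ (n : ℕ) (ρ : Set (Set E)), ρ ∈ Q →
      (∀ P, Good S T ρ P → ∃ σ ∈ Q, ∀ P', Good S T σ P' → P ∩ P' = ∅) →
      (GU S T ρ).ncard = n → False := by
  intro n
  induction n using Nat.strong_induction_on with
  | _ n ih =>
    intro ρ hρ hdoom hm
    obtain ⟨P₀, hP₀⟩ := hINV ρ hρ
    obtain ⟨σs, hσs, hd⟩ := hdoom P₀ hP₀
    have hpre : ∀ Z, Good S T σs Z → Z ∩ P₀ = ∅ := by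
      intro Z hZ
      rw [Set.inter_comm]
      exact hd Z hZ
    obtain ⟨κ, hκ, hal⟩ := evac hQ h hS T hρ hP₀.1 _ σs hσs hpre rfl
    have hdoomκ : ∀ P, Good S T κ P → ∃ σ ∈ Q, ∀ P', Good S T σ P' → P ∩ P' = ∅ := by
      intro Z hZ
      obtain ⟨P', hP', hne, hsub⟩ := hal Z hZ
      obtain ⟨σ', hσ', hd'⟩ := hdoom P' hP'
      refine ⟨σ', hσ', fun P'' hP'' => ?_⟩
      exact Set.subset_empty_iff.mp ((hd' P'' hP'') ▸ inter_subset_inter_left P'' hsub)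
    have hsub : GU S T κ ⊆ GU S T ρ \ P₀ := by
      intro x hx
      obtain ⟨Z, hZg, hxZ⟩ := hx
      obtain ⟨P', hP', hne, hsubZ⟩ := hal Z hZg
      refine ⟨⟨P', hP', hsubZ hxZ⟩, ?_⟩
      intro hxP₀
      have hd2 : Disjoint P' P₀ := (hQ ρ hρ).2.1 hP'.1 hP₀.1 hne
      exact Set.disjoint_left.mp hd2 (hsubZ hxZ) hxP₀
    obtain ⟨x₀, hx₀⟩ : P₀.Nonempty := (hQ ρ hρ).1 P₀ hP₀.1
    have hP₀U : P₀ ⊆ GU S T ρ := subset_sUnion_of_mem hP₀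
    have hss : GU S T ρ \ P₀ ⊂ GU S T ρ := by
      constructor
      · exact diff_subset
      · intro hcon
        exact (hcon (hP₀U hx₀)).2 hx₀
    have hlt : (GU S T κ).ncard < n := by
      calc (GU S T κ).ncard
          ≤ (GU S T ρ \ P₀).ncard := Set.ncard_le_ncard hsub (Set.toFinite _)
        _ < (GU S T ρ).ncard := Set.ncard_lt_ncard hss (Set.toFinite _)
        _ = n := hm
    exact ih _ hlt κ hκ hdoomκ rfl

lemma crux (hQ : ∀ μ ∈ Q, IsPartitionOf μ) (h : Refining Q) (hS : DownClosed S)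
    {T : Set (Set E)} (hINV : ∀ σ ∈ Q, ∃ P, Good S T σ P) {σ₀ : Set (Set E)} (hσ₀ : σ₀ ∈ Q) :
    ∃ P, Good S T σ₀ P ∧ ∀ σ ∈ Q, ∃ P', Good S T σ P' ∧ (P ∩ P').Nonempty := by
  by_contra hc
  push_neg at hc
  refine no_doomed hQ h hS hINV _ σ₀ hσ₀ (fun P hP => ?_) rfl
  obtain ⟨σ, hσ, hd⟩ := hc P hP
  exact ⟨σ, hσ, hd⟩

end RefDual

/-- if `Q` is refining then `Q` is dualising. -/
theorem refining_dualising [Finite E]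
    (Q : Set (Set (Set E))) (hQ : ∀ μ ∈ Q, IsPartitionOf μ)
    (h : Refining Q) : Dualising Q := by
  intro S hS
  classical
  by_cases hsm : ∃ μ ∈ Q, ∀ X ∈ μ, X ∈ S
  · exact Or.inl hsm
  right
  push_neg at hsm
  set Fam : Set (Set (Set E)) :=
    {T | (∀ X ∈ T, X ∉ S) ∧ (∀ X ∈ T, ∀ Y ∈ T, (X ∩ Y).Nonempty) ∧
      ∀ σ ∈ Q, ∃ P, RefDual.Good S T σ P} with hFamDef
  have hFam0 : (∅ : Set (Set E)) ∈ Fam := by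
    refine ⟨by simp, by simp, fun σ hσ => ?_⟩
    obtain ⟨X, hX, hXS⟩ := hsm σ hσ
    exact ⟨X, hX, hXS, by simp⟩
  obtain ⟨T, hT, hmax⟩ := Set.Finite.exists_maximalFor (fun T => T.ncard) Fam
    (Set.toFinite _) ⟨∅, hFam0⟩
  have hmem : ∀ σ ∈ Q, ∃ P ∈ σ, P ∈ T := by
    intro σ hσ
    obtain ⟨P, hPg, hPext⟩ := RefDual.crux hQ h hS hT.2.2 hσ
    refine ⟨P, hPg.1, ?_⟩
    by_contra hPnot
    have hins : insert P T ∈ Fam := by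
      refine ⟨?_, ?_, ?_⟩
      · intro X hX
        rcases Set.mem_insert_iff.mp hX with hXP | hX'
        · rw [hXP]; exact hPg.2.1
        · exact hT.1 X hX'
      · intro X hX Y hY
        rcases Set.mem_insert_iff.mp hX with hXP | hX' <;>
          rcases Set.mem_insert_iff.mp hY with hYP | hY'
        · rw [hXP, hYP, Set.inter_self]
          exact (hQ σ hσ).1 P hPg.1
        · rw [hXP]
          exact hPg.2.2 Y hY'
        · rw [hYP, Set.inter_comm]
          exact hPg.2.2 X hX'
        · exact hT.2.1 X hX' Y hY'
      · intro σ' hσ'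
        obtain ⟨P', hP'g, hPP'⟩ := hPext σ' hσ'
        refine ⟨P', hP'g.1, hP'g.2.1, ?_⟩
        intro t ht
        rcases Set.mem_insert_iff.mp ht with htP | ht'
        · rw [htP, Set.inter_comm]
          exact hPP'
        · exact hP'g.2.2 t ht' 
    have hle : T.ncard ≤ (insert P T).ncard :=
      Set.ncard_le_ncard (Set.subset_insert P T) (Set.toFinite _)
    have heq : (insert P T).ncard ≤ T.ncard := hmax hins hle
    rw [Set.ncard_insert_of_notMem hPnot (Set.toFinite _)] at heq
    omega
  exact ⟨T, ⟨hT.2.1, hmem⟩, hT.1⟩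
end

section
/- If a set Q of partitions of a finite set E is dualising, then Q is refining. -/
open Set

variable {E : Type*}

lemma delete_one [Finite E] : ∀ (n : ℕ) (J : Set E), J.ncard = n → J.Nonempty →
    ∀ ν : Set (Set E), J ∉ ν → Relation.ReflTransGen DelStep (insert J ν) ν := by
  intro n
  induction n using Nat.strong_induction_on with
  | _ n ih =>
    intro J hn hJ ν hJν
    obtain ⟨b, hb⟩ := hJ
    have hdel : insert J ν \ {J} = ν := by
      ext x; simp only [mem_diff, mem_insert_iff, mem_singleton_iff]
      constructor
      · rintro ⟨h1 | h1, h2⟩ <;> [exact absurd h1 h2; exact h1]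
      · intro hx; exact ⟨Or.inr hx, fun hxJ => hJν (hxJ ▸ hx)⟩
    have step : DelStep (insert J ν) (ν ∪ {X | X = J \ {b} ∧ X.Nonempty}) := by
      refine ⟨J, mem_insert _ _, b, hb, ?_⟩
      rw [hdel]
    by_cases hne : (J \ {b}).Nonempty
    · have hset : {X : Set E | X = J \ {b} ∧ X.Nonempty} = {J \ {b}} := by
        ext X; simp only [mem_setOf_eq, mem_singleton_iff]
        exact ⟨fun ⟨h1, _⟩ => h1, fun h1 => ⟨h1, h1 ▸ hne⟩⟩
      rw [hset] at step
      have hins : ν ∪ {J \ {b}} = insert (J \ {b}) ν := by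
        ext x; simp [or_comm]
      rw [hins] at step
      by_cases hmem : J \ {b} ∈ ν
      · rw [insert_eq_self.mpr hmem] at step
        exact Relation.ReflTransGen.single step
      · have hlt : (J \ {b}).ncard < n := by
          subst hn
          exact Set.ncard_diff_singleton_lt_of_mem hb (Set.toFinite J)
        exact Relation.ReflTransGen.head step
          (ih _ hlt _ rfl hne ν hmem)
    · have hset : {X : Set E | X = J \ {b} ∧ X.Nonempty} = ∅ := by
        ext X; simp only [mem_setOf_eq, mem_empty_iff_false, iff_false, not_and]
        rintro rfl; exact hne
      rw [hset, union_empty] at step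
      exact Relation.ReflTransGen.single step

lemma delete_junk [Finite E] (μ : Set (Set E)) :
    ∀ (n : ℕ) (K : Set (Set E)), K.ncard = n →
    (∀ J ∈ K, J.Nonempty ∧ J ∉ μ) →
    Relation.ReflTransGen DelStep (μ ∪ K) μ := by
  intro n
  induction n using Nat.strong_induction_on with
  | _ n ih =>
    intro K hn hK
    rcases eq_empty_or_nonempty K with rfl | ⟨J, hJ⟩
    · rw [union_empty]
    · obtain ⟨hJne, hJμ⟩ := hK J hJ
      have heq : μ ∪ K = insert J (μ ∪ (K \ {J})) := by
        ext x
        simp only [mem_union, mem_insert_iff, mem_diff, mem_singleton_iff]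
        constructor
        · rintro (hx | hx)
          · exact Or.inr (Or.inl hx)
          · by_cases hxJ : x = J
            · exact Or.inl hxJ
            · exact Or.inr (Or.inr ⟨hx, hxJ⟩)
        · rintro (rfl | hx | ⟨hx, _⟩)
          · exact Or.inr hJ
          · exact Or.inl hx
          · exact Or.inr hx
      have hnotin : J ∉ μ ∪ (K \ {J}) := by
        rintro (h1 | h2); exacts [hJμ h1, h2.2 rfl]
      have hlt : (K \ {J}).ncard < n := by
        subst hn
        exact Set.ncard_diff_singleton_lt_of_mem hJ (Set.toFinite K)
      rw [heq]
      exact (delete_one J.ncard J rfl hJne _ hnotin).trans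
        (ih _ hlt _ rfl (fun X hX => hK X hX.1))

/-- the traces of `μ` on members of `t` -/
def Traces (μ t : Set (Set E)) : Set (Set E) :=
  {X | ∃ C ∈ t, ∃ M ∈ μ, X = M ∩ C ∧ X.Nonempty}

lemma split_all [Finite E] (μ γ : Set (Set E)) (hμ : IsPartitionOf μ) :
    ∀ (n : ℕ) (s : Set (Set E)), s ⊆ γ → s.ncard = n →
    Relation.ReflTransGen SplitStep γ ((γ \ s) ∪ Traces μ s) := by
  intro n
  induction n using Nat.strong_induction_on with
  | _ n ih =>
    intro s hsγ hn
    rcases eq_empty_or_nonempty s with rfl | ⟨C, hC⟩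
    · have : Traces μ (∅ : Set (Set E)) = ∅ := by
        ext X; simp [Traces]
      rw [this, diff_empty, union_empty]
    · set s' := s \ {C} with hs'
      have hCs' : C ∉ s' := fun h => h.2 rfl
      have hlt : s'.ncard < n := hn ▸ Set.ncard_diff_singleton_lt_of_mem hC (Set.toFinite s)
      have prev := ih _ hlt s' (fun x hx => hsγ hx.1) rfl
      refine prev.tail ?_
      set δ : Set (Set E) := {X | ∃ M ∈ μ, X = M ∩ C ∧ X.Nonempty} with hδ
      refine ⟨C, Or.inl ⟨hsγ hC, hCs'⟩, δ, ?_, ?_, ?_, ?_⟩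
      · rintro D ⟨M, _, rfl, hne⟩; exact hne
      · rintro X ⟨M, hM, rfl, _⟩ Y ⟨M', hM', rfl, _⟩ hXY
        have hMM' : M ≠ M' := fun h => hXY (by rw [h])
        exact Disjoint.mono inter_subset_left inter_subset_left
          (hμ.2.1 hM hM' hMM')
      · ext x
        simp only [mem_sUnion, hδ, mem_setOf_eq]
        constructor
        · rintro ⟨X, ⟨M, _, rfl, _⟩, hx⟩; exact hx.2
        · intro hx
          have : x ∈ ⋃₀ μ := hμ.2.2 ▸ mem_univ x
          obtain ⟨M, hM, hxM⟩ := this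
          exact ⟨M ∩ C, ⟨M, hM, rfl, ⟨x, hxM, hx⟩⟩, hxM, hx⟩
      · ext X
        simp only [mem_union, mem_diff, mem_singleton_iff, Traces, hδ, mem_setOf_eq]
        constructor
        · rintro (⟨hXγ, hXs⟩ | ⟨C'', hC'', M, hM, rfl, hne⟩)
          · refine Or.inl ⟨Or.inl ⟨hXγ, fun h => hXs h.1⟩, fun h => hXs (h ▸ hC)⟩
          · by_cases hC''C : C'' = C
            · exact Or.inr ⟨M, hM, hC''C ▸ rfl, hne⟩
            · have hC''s' : C'' ∈ s' := ⟨hC'', hC''C⟩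
              by_cases hXC : M ∩ C'' = C
              · refine Or.inr ⟨M, hM, ?_, ?_⟩
                · rw [hXC]
                  have hCM : C ⊆ M := hXC ▸ inter_subset_left
                  rw [inter_eq_self_of_subset_right hCM]
                · exact hne
              · exact Or.inl ⟨Or.inr ⟨C'', hC''s', M, hM, rfl, hne⟩, hXC⟩
        · rintro (⟨hX, hXC⟩ | hX)
          · rcases hX with ⟨hXγ, hXs'⟩ | hX
            · exact Or.inl ⟨hXγ, fun hXs => hXs' ⟨hXs, hXC⟩⟩
            · obtain ⟨C'', hC'', M, hM, rfl, hne⟩ := hX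
              exact Or.inr ⟨C'', hC''.1, M, hM, rfl, hne⟩
          · obtain ⟨M, hM, rfl, hne⟩ := hX
            exact Or.inr ⟨C, hC, M, hM, rfl, hne⟩


/-- if `Q` is dualising then `Q` is refining. -/
theorem dualising_refining [Finite E]
    (Q : Set (Set (Set E))) (hQ : ∀ μ ∈ Q, IsPartitionOf μ)
    (h : Dualising Q) : Refining Q := by
  intro α β A B hA hB hQA hQB hAB
  have hS : DownClosed {X : Set E | ∃ C ∈ α ∪ β, X ⊆ C} := by
    rintro X ⟨C, hC, hXC⟩ Y hYX
    exact ⟨C, hC, hYX.trans hXC⟩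
  rcases h _ hS with ⟨μ, hμQ, hμS⟩ | ⟨Br, ⟨hBr1, hBr2⟩, hBrS⟩
  · refine ⟨μ, hμQ, ?_⟩
    have hμP := hQ μ hμQ
    have hsplit := split_all μ (α ∪ β) hμP (α ∪ β).ncard (α ∪ β) subset_rfl rfl
    rw [diff_self, empty_union] at hsplit
    have hsub : μ ⊆ Traces μ (α ∪ β) := by
      intro M hM
      obtain ⟨C, hC, hMC⟩ := hμS M hM
      exact ⟨C, hC, M, hM, (inter_eq_left.mpr hMC).symm, hμP.1 M hM⟩
    have hdel := delete_junk μ (Traces μ (α ∪ β) \ μ).ncard (Traces μ (α ∪ β) \ μ) rfl ?_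
    · rw [Set.union_diff_cancel hsub] at hdel
      exact Relation.ReflTransGen.trans (Relation.ReflTransGen.mono (fun x y hh => Or.inr hh) _ _ hsplit)
        (Relation.ReflTransGen.mono (fun x y hh => Or.inl hh) _ _ hdel)
    · rintro J ⟨⟨C, hC, M, hM, rfl, hne⟩, hJμ⟩
      exact ⟨hne, hJμ⟩
  · obtain ⟨X, hXmem, hXBr⟩ := hBr2 _ hQA
    have hXA : X = A := by
      rcases hXmem with rfl | hXα
      · rfl
      · exact absurd (⟨X, Or.inl hXα, subset_rfl⟩ :
          X ∈ {X : Set E | ∃ C ∈ α ∪ β, X ⊆ C}) (hBrS X hXBr)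
    obtain ⟨Y, hYmem, hYBr⟩ := hBr2 _ hQB
    have hYB : Y = B := by
      rcases hYmem with rfl | hYβ
      · rfl
      · exact absurd (⟨Y, Or.inr hYβ, subset_rfl⟩ :
          Y ∈ {X : Set E | ∃ C ∈ α ∪ β, X ⊆ C}) (hBrS Y hYBr)
    have hne := hBr1 X hXBr Y hYBr
    rw [hXA, hYB, hAB] at hne
    exact absurd hne (by simp)
end

section
/- A set of partitions Q is dualising if and only if it is refining. -/
open Set

variable {E : Type*}

section AuxProofs

variable {E : Type*}

private lemma stepSubset' {γ α : Set (Set E)} (h : DelStep γ α ∨ SplitStep γ α) :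
    ∀ P ∈ α, ∃ C ∈ γ, P ⊆ C := by
  rcases h with ⟨B, hB, b, hb, rfl⟩ | ⟨B, hB, δ, hδne, hδd, hδU, rfl⟩
  · intro P hP
    rcases hP with ⟨hP, -⟩ | ⟨hP, -⟩
    · exact ⟨P, hP, subset_rfl⟩
    · exact ⟨B, hB, hP ▸ diff_subset⟩
  · intro P hP
    rcases hP with ⟨hP, -⟩ | hP
    · exact ⟨P, hP, subset_rfl⟩
    · exact ⟨B, hB, hδU ▸ subset_sUnion_of_mem hP⟩

private lemma finerSubset {α β : Set (Set E)} (h : Finer α β) :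
    ∀ P ∈ α, ∃ C ∈ β, P ⊆ C := by
  unfold Finer at h
  induction h with
  | refl => exact fun P hP => ⟨P, hP, subset_rfl⟩
  | tail _ hstep ih =>
      intro P hP
      obtain ⟨C, hC, hPC⟩ := stepSubset' hstep P hP
      obtain ⟨D, hD, hCD⟩ := ih C hC
      exact ⟨D, hD, hPC.trans hCD⟩

private lemma delOne [Finite E] :
    ∀ (n : ℕ) (β : Set (Set E)) (B : Set E), B.ncard ≤ n → B ∈ β → B.Nonempty →
      Relation.ReflTransGen DelStep β (β \ {B}) := by
  intro n
  induction n with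
  | zero =>
      intro β B hcard hB hne
      have : B.ncard = 0 := Nat.le_zero.1 hcard
      rw [Set.ncard_eq_zero] at this
      exact absurd this hne.ne_empty
  | succ n ih =>
      intro β B hcard hB hne
      obtain ⟨b, hb⟩ := hne
      by_cases h0 : (B \ {b}).Nonempty
      · have hset : {X | X = B \ {b} ∧ X.Nonempty} = {B \ {b}} := by
          ext X; constructor
          · rintro ⟨rfl, -⟩; rfl
          · rintro rfl; exact ⟨rfl, h0⟩
        by_cases h1 : B \ {b} ∈ β \ {B}
        · refine Relation.ReflTransGen.single ⟨B, hB, b, hb, ?_⟩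
          rw [hset, Set.union_singleton, Set.insert_eq_self.2 h1]
        · have hstep : DelStep β (insert (B \ {b}) (β \ {B})) :=
            ⟨B, hB, b, hb, by rw [hset, Set.union_singleton]⟩
          have hmem : B \ {b} ∈ insert (B \ {b}) (β \ {B}) := Set.mem_insert _ _
          have hc2 : (B \ {b}).ncard ≤ n := by
            have := Set.ncard_diff_singleton_lt_of_mem hb (Set.toFinite B)
            omega
          have hpath := ih (insert (B \ {b}) (β \ {B})) (B \ {b}) hc2 hmem h0
          have heq : insert (B \ {b}) (β \ {B}) \ {B \ {b}} = β \ {B} := by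
            rw [Set.insert_diff_self_of_notMem h1]
          rw [heq] at hpath
          exact Relation.ReflTransGen.head hstep hpath
      · refine Relation.ReflTransGen.single ⟨B, hB, b, hb, ?_⟩
        have hset : {X | X = B \ {b} ∧ X.Nonempty} = (∅ : Set (Set E)) := by
          ext X
          simp only [Set.mem_setOf_eq, Set.mem_empty_iff_false, iff_false, not_and]
          rintro rfl; exact h0
        rw [hset, Set.union_empty]

private lemma delMany [Finite E] :
    ∀ (n : ℕ) (γ μ : Set (Set E)), (γ \ μ).ncard ≤ n → μ ⊆ γ →
      (∀ J ∈ γ, J.Nonempty) → Relation.ReflTransGen DelStep γ μ := by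
  intro n
  induction n with
  | zero =>
      intro γ μ hcard hsub _
      have h0 : γ \ μ = ∅ := by
        rw [← Set.ncard_eq_zero (Set.toFinite _)]; omega
      have : γ = μ := subset_antisymm (fun x hx => by
        by_contra hxn
        have hmem : x ∈ γ \ μ := ⟨hx, hxn⟩
        rw [h0] at hmem
        exact absurd hmem (Set.notMem_empty x)) hsub
      exact this ▸ Relation.ReflTransGen.refl
  | succ n ih =>
      intro γ μ hcard hsub hne
      by_cases h0 : γ \ μ = ∅
      · have : γ = μ := subset_antisymm (fun x hx => by
          by_contra hxn
          have hmem : x ∈ γ \ μ := ⟨hx, hxn⟩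
          rw [h0] at hmem
          exact absurd hmem (Set.notMem_empty x)) hsub
        exact this ▸ Relation.ReflTransGen.refl
      · obtain ⟨J, hJ⟩ := Set.nonempty_iff_ne_empty.2 h0
        have hpath1 := delOne J.ncard γ J le_rfl hJ.1 (hne J hJ.1)
        have hsub2 : μ ⊆ γ \ {J} := fun x hx => ⟨hsub hx, by rintro rfl; exact hJ.2 hx⟩
        have hcard2 : ((γ \ {J}) \ μ).ncard ≤ n := by
          have hss : (γ \ {J}) \ μ ⊂ γ \ μ := by
            constructor
            · rintro x ⟨⟨hx1, hx2⟩, hx3⟩; exact ⟨hx1, hx3⟩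
            · intro hcon
              have := hcon hJ
              exact this.1.2 rfl
          have := Set.ncard_lt_ncard hss (Set.toFinite _)
          omega
        have hne2 : ∀ K ∈ γ \ {J}, K.Nonempty := fun K hK => hne K hK.1
        exact hpath1.trans (ih (γ \ {J}) μ hcard2 hsub2 hne2)

private lemma extractLemma [Finite E] :
    ∀ (n : ℕ) (γ μ : Set (Set E)), ({M | M ∈ μ ∧ M ∉ γ}).ncard ≤ n →
      μ.PairwiseDisjoint id → (∀ M ∈ μ, M.Nonempty) → (∀ J ∈ γ, J.Nonempty) →
      (∀ M ∈ μ, ∃ C ∈ γ, M ⊆ C) →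
      ∃ γ', Relation.ReflTransGen (fun x y => DelStep x y ∨ SplitStep x y) γ γ' ∧
        μ ⊆ γ' ∧ ∀ J ∈ γ', J.Nonempty := by
  intro n
  induction n with
  | zero =>
      intro γ μ hcard _ _ hneγ _
      refine ⟨γ, Relation.ReflTransGen.refl, fun M hM => ?_, hneγ⟩
      by_contra hMγ
      have h0 : {M | M ∈ μ ∧ M ∉ γ} = ∅ := by
        rw [← Set.ncard_eq_zero (Set.toFinite _)]; omega
      have hmem : M ∈ {M | M ∈ μ ∧ M ∉ γ} := ⟨hM, hMγ⟩
      rw [h0] at hmem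
      exact absurd hmem (Set.notMem_empty M)
  | succ n ih =>
      intro γ μ hcard hdisj hneμ hneγ hcov
      by_cases h0 : {M | M ∈ μ ∧ M ∉ γ} = ∅
      · refine ⟨γ, Relation.ReflTransGen.refl, fun M hM => ?_, hneγ⟩
        by_contra hMγ
        have hmem : M ∈ {M | M ∈ μ ∧ M ∉ γ} := ⟨hM, hMγ⟩
        rw [h0] at hmem
        exact absurd hmem (Set.notMem_empty M)
      · obtain ⟨M, hMμ, hMγ⟩ := Set.nonempty_iff_ne_empty.2 h0
        obtain ⟨C, hCγ, hMC⟩ := hcov M hMμ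
        have hMne : M ≠ C := by rintro rfl; exact hMγ hCγ
        have hCM : (C \ M).Nonempty := by
          rw [Set.diff_nonempty]
          intro hCsub
          exact hMne (subset_antisymm hMC hCsub)
        have hMnonempty := hneμ M hMμ
        set δ : Set (Set E) := {M, C \ M} with hδdef
        have hsplit : SplitStep γ ((γ \ {C}) ∪ δ) := by
          refine ⟨C, hCγ, δ, ?_, ?_, ?_, rfl⟩
          · rintro D (rfl | rfl)
            · exact hMnonempty
            · exact hCM
          · rintro a (rfl | rfl) b (rfl | rfl) hab
            · exact absurd rfl hab
            · exact Set.disjoint_sdiff_right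
            · exact Set.disjoint_sdiff_left
            · exact absurd rfl hab
          · rw [Set.sUnion_pair, Set.union_diff_cancel hMC]
        set γ₂ := (γ \ {C}) ∪ δ with hγ₂def
        have hCμ : C ∉ μ := by
          intro hCμ
          have := hdisj hMμ hCμ hMne
          have : M ∩ C = ∅ := Set.disjoint_iff_inter_eq_empty.1 this
          obtain ⟨m, hm⟩ := hMnonempty
          have hmem : m ∈ M ∩ C := ⟨hm, hMC hm⟩
          rw [this] at hmem
          exact absurd hmem (Set.notMem_empty m)
        have hMγ₂ : M ∈ γ₂ := Or.inr (Or.inl rfl)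
        have hmeas : {M' | M' ∈ μ ∧ M' ∉ γ₂} ⊆ {M' | M' ∈ μ ∧ M' ∉ γ} \ {M} := by
          rintro M' ⟨hM'μ, hM'γ₂⟩
          refine ⟨⟨hM'μ, fun hM'γ => ?_⟩, fun hM'M => ?_⟩
          · rcases eq_or_ne M' C with rfl | hM'C
            · exact hCμ hM'μ
            · exact hM'γ₂ (Or.inl ⟨hM'γ, hM'C⟩)
          · rw [Set.mem_singleton_iff] at hM'M
            exact hM'γ₂ (hM'M ▸ hMγ₂)
        have hcard2 : ({M' | M' ∈ μ ∧ M' ∉ γ₂}).ncard ≤ n := by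
          have h1 := Set.ncard_le_ncard hmeas (Set.toFinite _)
          have hss : {M' | M' ∈ μ ∧ M' ∉ γ} \ {M} ⊂ {M' | M' ∈ μ ∧ M' ∉ γ} := by
            refine ⟨Set.diff_subset, fun hcon => ?_⟩
            have := hcon (⟨hMμ, hMγ⟩ : M ∈ {M' | M' ∈ μ ∧ M' ∉ γ})
            exact this.2 rfl
          have h2 := Set.ncard_lt_ncard hss (Set.toFinite _)
          omega
        have hneγ₂ : ∀ J ∈ γ₂, J.Nonempty := by
          rintro J (⟨hJ, -⟩ | (rfl | rfl))
          · exact hneγ J hJ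
          · exact hMnonempty
          · exact hCM
        have hcov2 : ∀ M' ∈ μ, ∃ C' ∈ γ₂, M' ⊆ C' := by
          intro M' hM'μ
          rcases eq_or_ne M' M with rfl | hM'M
          · exact ⟨M', hMγ₂, subset_rfl⟩
          · obtain ⟨C', hC'γ, hM'C'⟩ := hcov M' hM'μ
            rcases eq_or_ne C' C with rfl | hC'C
            · refine ⟨C' \ M, Or.inr (Or.inr rfl), fun x hx => ⟨hM'C' hx, fun hxM => ?_⟩⟩
              have hd := hdisj hM'μ hMμ hM'M
              have heq : M' ∩ M = ∅ := Set.disjoint_iff_inter_eq_empty.1 hd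
              have hmem : x ∈ M' ∩ M := ⟨hx, hxM⟩
              rw [heq] at hmem
              exact absurd hmem (Set.notMem_empty x)
            · exact ⟨C', Or.inl ⟨hC'γ, hC'C⟩, hM'C'⟩
        obtain ⟨γ', hpath, hsubμ, hneγ'⟩ := ih γ₂ μ hcard2 hdisj hneμ hneγ₂ hcov2
        exact ⟨γ', Relation.ReflTransGen.head (Or.inr hsplit) hpath, hsubμ, hneγ'⟩

end AuxProofs

section BackwardProofs

variable {E : Type*}

/-- The union of the `T`-big parts of `σ`. -/
private def BigU (T σ : Set (Set E)) : Set E := ⋃₀ {P | P ∈ σ ∧ P ∉ T}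

private lemma mem_bigU {T σ : Set (Set E)} {P : Set E} (hP : P ∈ σ) (hPT : P ∉ T) :
    P ⊆ BigU T σ := subset_sUnion_of_mem ⟨hP, hPT⟩

private lemma innerLemma [Finite E] {Q : Set (Set (Set E))}
    (hQ : ∀ μ ∈ Q, IsPartitionOf μ) (hR : Refining Q)
    {T : Set (Set E)} (hT : DownClosed T) {X : Set E}
    {ν : Set (Set E)} (hνQ : ν ∈ Q) (hνcl : ∀ P ∈ ν, P ∈ T ∨ P ⊆ Xᶜ)
    {B : Set E} (hBν : B ∈ ν) (hBT : B ∉ T) :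
    ∀ (m : ℕ) (ρ : Set (Set E)), ρ ∈ Q → (∀ P ∈ ρ, P ∈ T ∨ P ⊆ X ∨ P ⊆ Xᶜ) →
      BigU T ρ ∩ Xᶜ ⊆ BigU T ν \ B → (BigU T ρ ∩ X).ncard ≤ m →
      ∃ τ ∈ Q, (∀ P ∈ τ, P ∈ T ∨ P ⊆ Xᶜ) ∧ BigU T τ ⊆ BigU T ν \ B := by
  have hBXc : B ⊆ Xᶜ := (hνcl B hBν).resolve_left hBT
  intro m
  induction m with
  | zero =>
      intro ρ hρQ hρcl hinv hcard
      have h0 : BigU T ρ ∩ X = ∅ := by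
        rw [← Set.ncard_eq_zero (Set.toFinite _)]; omega
      refine ⟨ρ, hρQ, fun P hP => ?_, fun z hz => ?_⟩
      · rcases hρcl P hP with h | h | h
        · exact Or.inl h
        · by_cases hPT : P ∈ T
          · exact Or.inl hPT
          · obtain ⟨p, hp⟩ := (hQ ρ hρQ).1 P hP
            have : p ∈ BigU T ρ ∩ X := ⟨mem_bigU hP hPT hp, h hp⟩
            rw [h0] at this; exact this.elim
        · exact Or.inr h
      · obtain ⟨P, ⟨hPρ, hPT⟩, hzP⟩ := hz
        rcases hρcl P hPρ with h | h | h
        · exact absurd h hPT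
        · have : z ∈ BigU T ρ ∩ X := ⟨mem_bigU hPρ hPT hzP, h hzP⟩
          rw [h0] at this; exact this.elim
        · exact hinv ⟨mem_bigU hPρ hPT hzP, h hzP⟩
  | succ m ih =>
      intro ρ hρQ hρcl hinv hcard
      by_cases h0 : BigU T ρ ∩ X = ∅
      · refine ⟨ρ, hρQ, fun P hP => ?_, fun z hz => ?_⟩
        · rcases hρcl P hP with h | h | h
          · exact Or.inl h
          · by_cases hPT : P ∈ T
            · exact Or.inl hPT
            · obtain ⟨p, hp⟩ := (hQ ρ hρQ).1 P hP
              have : p ∈ BigU T ρ ∩ X := ⟨mem_bigU hP hPT hp, h hp⟩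
              rw [h0] at this; exact this.elim
          · exact Or.inr h
        · obtain ⟨P, ⟨hPρ, hPT⟩, hzP⟩ := hz
          rcases hρcl P hPρ with h | h | h
          · exact absurd h hPT
          · have : z ∈ BigU T ρ ∩ X := ⟨mem_bigU hPρ hPT hzP, h hzP⟩
            rw [h0] at this; exact this.elim
          · exact hinv ⟨mem_bigU hPρ hPT hzP, h hzP⟩
      · obtain ⟨x, hx⟩ := Set.nonempty_iff_ne_empty.2 h0
        obtain ⟨⟨A', ⟨hA'ρ, hA'T⟩, hxA'⟩, hxX⟩ := hx
        have hA'X : A' ⊆ X := by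
          rcases hρcl A' hA'ρ with h | h | h
          · exact absurd h hA'T
          · exact h
          · exact absurd (h hxA') (by simpa using hxX)
        have hAB : A' ∩ B = ∅ := by
          apply Set.subset_empty_iff.1
          intro z hz
          exact absurd (hA'X hz.1) (hBXc hz.2)
        have hA'ins : insert A' (ρ \ {A'}) ∈ Q := by
          rw [Set.insert_diff_singleton, Set.insert_eq_self.2 hA'ρ]; exact hρQ
        have hBins : insert B (ν \ {B}) ∈ Q := by
          rw [Set.insert_diff_singleton, Set.insert_eq_self.2 hBν]; exact hνQ
        obtain ⟨σ, hσQ, hσfine⟩ := hR (ρ \ {A'}) (ν \ {B}) A' B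
          (fun h => h.2 rfl) (fun h => h.2 rfl) hA'ins hBins hAB
        have hsub := finerSubset hσfine
        have hW_not_T : ∀ {P W : Set E}, P ⊆ W → P ∉ T → W ∉ T :=
          fun hPW hPT hWT => hPT (hT _ hWT _ hPW)
        -- class membership for σ
        have hσcl : ∀ P ∈ σ, P ∈ T ∨ P ⊆ X ∨ P ⊆ Xᶜ := by
          intro P hP
          obtain ⟨W, hW, hPW⟩ := hsub P hP
          rcases hW with ⟨hWρ, -⟩ | ⟨hWν, -⟩
          · rcases hρcl W hWρ with h | h | h
            · exact Or.inl (hT _ h _ hPW)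
            · exact Or.inr (Or.inl (hPW.trans h))
            · exact Or.inr (Or.inr (hPW.trans h))
          · rcases hνcl W hWν with h | h
            · exact Or.inl (hT _ h _ hPW)
            · exact Or.inr (Or.inr (hPW.trans h))
        have hρdisj := (hQ ρ hρQ).2.1
        have hνdisj := (hQ ν hνQ).2.1
        have hσinv : BigU T σ ∩ Xᶜ ⊆ BigU T ν \ B := by
          rintro z ⟨⟨P, ⟨hPσ, hPT⟩, hzP⟩, hzXc⟩
          obtain ⟨W, hW, hPW⟩ := hsub P hPσ
          have hWT := hW_not_T hPW hPT
          rcases hW with ⟨hWρ, -⟩ | ⟨hWν, hWB⟩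
          · have hWXc : W ⊆ Xᶜ := by
              rcases hρcl W hWρ with h | h | h
              · exact absurd h hWT
              · exact absurd (h (hPW hzP)) (by simpa using hzXc)
              · exact h
            exact hinv ⟨⟨W, ⟨hWρ, hWT⟩, hPW hzP⟩, hWXc (hPW hzP)⟩
          · refine ⟨⟨W, ⟨hWν, hWT⟩, hPW hzP⟩, fun hzB => ?_⟩
            have hWB' : W ≠ B := by simpa using hWB
            have := hνdisj hWν hBν hWB'
            exact Set.disjoint_left.1 this (hPW hzP) hzB
        have hσX : BigU T σ ∩ X ⊆ (BigU T ρ ∩ X) \ A' := by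
          rintro z ⟨⟨P, ⟨hPσ, hPT⟩, hzP⟩, hzX⟩
          obtain ⟨W, hW, hPW⟩ := hsub P hPσ
          have hWT := hW_not_T hPW hPT
          rcases hW with ⟨hWρ, hWA⟩ | ⟨hWν, -⟩
          · have hWA' : W ≠ A' := by simpa using hWA
            refine ⟨⟨⟨W, ⟨hWρ, hWT⟩, hPW hzP⟩, hzX⟩, fun hzA => ?_⟩
            have := hρdisj hWρ hA'ρ hWA'
            exact Set.disjoint_left.1 this (hPW hzP) hzA
          · have hWXc : W ⊆ Xᶜ := (hνcl W hWν).resolve_left hWT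
            exact absurd (hWXc (hPW hzP)) (by simpa using hzX)
        have hcard2 : (BigU T σ ∩ X).ncard ≤ m := by
          have h1 := Set.ncard_le_ncard hσX (Set.toFinite _)
          have hss : (BigU T ρ ∩ X) \ A' ⊂ BigU T ρ ∩ X := by
            refine ⟨Set.diff_subset, fun hcon => ?_⟩
            have := hcon (⟨⟨A', ⟨hA'ρ, hA'T⟩, hxA'⟩, hxX⟩ : x ∈ BigU T ρ ∩ X)
            exact this.2 hxA'
          have h2 := Set.ncard_lt_ncard hss (Set.toFinite _)
          omega
        exact ih σ hσQ hσcl hσinv hcard2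

private lemma outerLemma [Finite E] {Q : Set (Set (Set E))}
    (hQ : ∀ μ ∈ Q, IsPartitionOf μ) (hR : Refining Q)
    {T : Set (Set E)} (hT : DownClosed T) {X : Set E} :
    ∀ (n : ℕ) (μ ν : Set (Set E)), μ ∈ Q → ν ∈ Q →
      (∀ P ∈ μ, P ∈ T ∨ P ⊆ X) → (∀ P ∈ ν, P ∈ T ∨ P ⊆ Xᶜ) →
      (BigU T μ).ncard + (BigU T ν).ncard ≤ n →
      ∃ ρ ∈ Q, ∀ P ∈ ρ, P ∈ T := by
  intro n
  induction n with
  | zero =>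
      intro μ ν hμQ hνQ hμcl hνcl hcard
      refine ⟨ν, hνQ, fun P hP => ?_⟩
      by_contra hPT
      obtain ⟨p, hp⟩ := (hQ ν hνQ).1 P hP
      have h0 : BigU T ν = ∅ := by
        rw [← Set.ncard_eq_zero (Set.toFinite _)]; omega
      have hmem := mem_bigU hP hPT hp
      rw [h0] at hmem
      exact absurd hmem (Set.notMem_empty p)
  | succ n ih =>
      intro μ ν hμQ hνQ hμcl hνcl hcard
      by_cases hν0 : BigU T ν = ∅
      · refine ⟨ν, hνQ, fun P hP => ?_⟩
        by_contra hPT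
        obtain ⟨p, hp⟩ := (hQ ν hνQ).1 P hP
        have hmem := mem_bigU hP hPT hp
        rw [hν0] at hmem
        exact absurd hmem (Set.notMem_empty p)
      · obtain ⟨b, B, ⟨hBν, hBT⟩, hbB⟩ := Set.nonempty_iff_ne_empty.2 hν0
        have hμcl3 : ∀ P ∈ μ, P ∈ T ∨ P ⊆ X ∨ P ⊆ Xᶜ := fun P hP =>
          (hμcl P hP).imp id Or.inl
        have hμinv : BigU T μ ∩ Xᶜ ⊆ BigU T ν \ B := by
          rintro z ⟨⟨P, ⟨hPμ, hPT⟩, hzP⟩, hzXc⟩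
          have := (hμcl P hPμ).resolve_left hPT
          exact absurd (this hzP) (by simpa using hzXc)
        obtain ⟨τ, hτQ, hτcl, hτU⟩ := innerLemma hQ hR hT hνQ hνcl hBν hBT
          (BigU T μ ∩ X).ncard μ hμQ hμcl3 hμinv le_rfl
        have hBsub : B ⊆ BigU T ν := mem_bigU hBν hBT
        have hBne : B.Nonempty := (hQ ν hνQ).1 B hBν
        have hss : BigU T ν \ B ⊂ BigU T ν := by
          refine ⟨Set.diff_subset, fun hcon => ?_⟩
          obtain ⟨b', hb'⟩ := hBne
          exact (hcon (hBsub hb')).2 hb'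
        have h1 := Set.ncard_lt_ncard hss (Set.toFinite _)
        have h2 := Set.ncard_le_ncard hτU (Set.toFinite _)
        exact ih μ τ hμQ hτQ hμcl hτcl (by omega)

end BackwardProofs


/-- `Q` is dualising iff `Q` is refining. -/
theorem dualising_iff_refining [Finite E]
    (Q : Set (Set (Set E))) (hQ : ∀ μ ∈ Q, IsPartitionOf μ) :
    Dualising Q ↔ Refining Q := by
  constructor
  · intro hD α β A B hAα hBβ hAQ hBQ hAB
    set S : Set (Set E) := {X | ∃ C ∈ α ∪ β, X ⊆ C} with hSdef
    have hS : DownClosed S := by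
      rintro X ⟨C, hC, hXC⟩ Y hYX
      exact ⟨C, hC, hYX.trans hXC⟩
    rcases hD S hS with ⟨μ, hμQ, hμS⟩ | ⟨Br, ⟨hBr1, hBr2⟩, hBr3⟩
    · refine ⟨μ, hμQ, ?_⟩
      obtain ⟨hμne, hμdisj, -⟩ := hQ μ hμQ
      have hneγ : ∀ J ∈ α ∪ β, J.Nonempty := by
        rintro J (hJ | hJ)
        · exact (hQ _ hAQ).1 J (Set.mem_insert_of_mem _ hJ)
        · exact (hQ _ hBQ).1 J (Set.mem_insert_of_mem _ hJ)
      obtain ⟨γ', hpath, hμγ', hneγ'⟩ := extractLemma _ (α ∪ β) μ le_rfl hμdisj hμne hneγ hμS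
      have hdel := delMany ((γ' \ μ).ncard) γ' μ le_rfl hμγ' hneγ'
      exact hpath.trans (Relation.ReflTransGen.mono (p := fun x y => DelStep x y ∨ SplitStep x y) (fun _ _ h => Or.inl h) _ _ hdel)
    · exfalso
      have hABr : A ∈ Br := by
        obtain ⟨Xp, hXp, hXBr⟩ := hBr2 _ hAQ
        rcases hXp with rfl | hXp
        · exact hXBr
        · exact ((hBr3 Xp hXBr) (⟨Xp, Or.inl hXp, subset_rfl⟩ : Xp ∈ S)).elim
      have hBBr : B ∈ Br := by
        obtain ⟨Xp, hXp, hXBr⟩ := hBr2 _ hBQ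
        rcases hXp with rfl | hXp
        · exact hXBr
        · exact ((hBr3 Xp hXBr) (⟨Xp, Or.inr hXp, subset_rfl⟩ : Xp ∈ S)).elim
      have := hBr1 A hABr B hBBr
      rw [hAB] at this
      exact Set.not_nonempty_empty this
  · intro hR S hS
    by_cases h1 : ∃ μ ∈ Q, ∀ X ∈ μ, X ∈ S
    · exact Or.inl h1
    · right
      set 𝒮 : Set (Set (Set E)) :=
        {T | DownClosed T ∧ S ⊆ T ∧ ¬∃ μ ∈ Q, ∀ X ∈ μ, X ∈ T} with h𝒮def
      have hS𝒮 : S ∈ 𝒮 := ⟨hS, subset_rfl, h1⟩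
      obtain ⟨T, hT𝒮, hTmax'⟩ :=
        Set.Finite.exists_maximalFor id 𝒮 (Set.toFinite _) ⟨S, hS𝒮⟩
      have hTmax : ∀ T' ∈ 𝒮, id T ≤ id T' → id T = id T' :=
        fun T' h h' => le_antisymm h' (hTmax' h h')
      obtain ⟨hTdown, hST, hTnos⟩ := hT𝒮
      have key : ∀ X : Set E, X ∉ T → ∃ μ ∈ Q, ∀ P ∈ μ, P ∈ T ∨ P ⊆ X := by
        intro X hX
        by_contra hno
        push_neg at hno
        have hT' : T ∪ {Z | Z ⊆ X} ∈ 𝒮 := by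
          refine ⟨?_, hST.trans Set.subset_union_left, ?_⟩
          · rintro Y (hY | hY) Z hZY
            · exact Or.inl (hTdown Y hY Z hZY)
            · exact Or.inr (hZY.trans hY)
          · rintro ⟨μ, hμQ, hμ⟩
            obtain ⟨P, hPμ, hPT, hPX⟩ := hno μ hμQ
            rcases hμ P hPμ with h | h
            · exact hPT h
            · exact hPX h
        have heq := hTmax _ hT' Set.subset_union_left
        have hXT' : X ∈ T ∪ {Z | Z ⊆ X} := Or.inr (Set.mem_setOf.2 subset_rfl)
        simp only [id_eq] at heq
        rw [← heq] at hXT'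
        exact hX hXT'
      refine ⟨{X | X ∉ T}, ⟨?_, ?_⟩, fun X hX hXS => hX (hST hXS)⟩
      · intro X hX Y hY
        by_contra hemp
        rw [Set.not_nonempty_iff_eq_empty] at hemp
        have hYXc : Y ⊆ Xᶜ := fun y hy hyX => by
          have hmem : y ∈ X ∩ Y := ⟨hyX, hy⟩
          rw [hemp] at hmem
          exact absurd hmem (Set.notMem_empty y)
        have hXcT : Xᶜ ∉ T := fun h => hY (hTdown _ h _ hYXc)
        obtain ⟨μ, hμQ, hμcl⟩ := key X hX
        obtain ⟨ν, hνQ, hνcl⟩ := key Xᶜ hXcT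
        obtain ⟨ρ, hρQ, hρT⟩ := outerLemma hQ hR hTdown _ μ ν hμQ hνQ hμcl hνcl le_rfl
        exact hTnos ⟨ρ, hρQ, hρT⟩
      · intro μ hμQ
        by_contra hno
        push_neg at hno
        exact hTnos ⟨μ, hμQ, fun X hX => not_not.1 (hno X hX)⟩
end

section
/- For any partition (α|A) in P↑ \ P, there exists a partition (γ|C) in P with at least three parts and a partition (C^c|μ|A) in P↑ such that (α|A) = (γ|μ|A). -/
open Set

variable {E : Type*}

lemma parts_subset_compl {α : Set (Set E)} {A : Set E}
    (hp : IsPartitionOf (insert A α)) (hA : A ∉ α) :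
    ∀ X ∈ α, X ⊆ Aᶜ := by
  intro X hX
  have hne : X ≠ A := fun h => hA (h ▸ hX)
  have hd := hp.2.1 (mem_insert_of_mem A hX) (mem_insert A α) hne
  intro x hx hxA
  exact (Set.disjoint_left.mp hd) hx hxA

lemma mergeClosure_isPartition {P : Set (Set (Set E))}
    (hP : ∀ μ ∈ P, IsPartitionOf μ) {μ : Set (Set E)}
    (h : MergeClosure P μ) : IsPartitionOf μ := by
  induction h with
  | base h => exact hP _ h
  | @merge α β A hA hB m1 m2 ih1 ih2 =>
    obtain ⟨n1, d1, u1⟩ := ih1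
    obtain ⟨n2, d2, u2⟩ := ih2
    have s1 : ∀ X ∈ α, X ⊆ Aᶜ := parts_subset_compl ⟨n1, d1, u1⟩ hA
    have s2 : ∀ X ∈ β, X ⊆ A := by
      have := parts_subset_compl ⟨n2, d2, u2⟩ hB
      simpa using this
    refine ⟨?_, ?_, ?_⟩
    · rintro X (hX | hX)
      · exact n1 X (mem_insert_of_mem _ hX)
      · exact n2 X (mem_insert_of_mem _ hX)
    · rintro X (hX | hX) Y (hY | hY) hne
      · exact d1 (mem_insert_of_mem _ hX) (mem_insert_of_mem _ hY) hne
      · exact Set.disjoint_left.mpr fun x hx hx' => (s1 X hX hx) (s2 Y hY hx')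
      · exact Set.disjoint_left.mpr fun x hx hx' => (s1 Y hY hx') (s2 X hX hx)
      · exact d2 (mem_insert_of_mem _ hX) (mem_insert_of_mem _ hY) hne
    · apply eq_univ_of_forall
      intro x
      by_cases hx : x ∈ A
      · have : x ∈ ⋃₀ insert Aᶜ β := u2 ▸ mem_univ x
        rcases this with ⟨Y, hY, hxY⟩
        rcases hY with rfl | hY
        · exact absurd hx hxY
        · exact ⟨Y, Or.inr hY, hxY⟩
      · have : x ∈ ⋃₀ insert A α := u1 ▸ mem_univ x
        rcases this with ⟨Y, hY, hxY⟩
        rcases hY with rfl | hY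
        · exact absurd hxY hx
        · exact ⟨Y, Or.inl hY, hxY⟩

def MCGoal (P : Set (Set (Set E))) (β : Set (Set E)) (A : Set E) : Prop :=
  ∃ γ μ C, C ∉ γ ∧ insert C γ ∈ P ∧ 3 ≤ (insert C γ).ncard ∧
    MergeClosure P (insert Cᶜ (insert A μ)) ∧ β \ {A} = γ ∪ μ

lemma keyStep [Finite E] {P : Set (Set (Set E))} (hP : ∀ μ ∈ P, IsPartitionOf μ)
    {α₀ β₀ : Set (Set E)} {A₀ : Set E}
    (hA₀ : A₀ ∉ α₀) (hB₀ : A₀ᶜ ∉ β₀)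
    (m1 : MergeClosure P (insert A₀ α₀)) (m2 : MergeClosure P (insert A₀ᶜ β₀))
    (ih1 : ∀ A ∈ insert A₀ α₀, insert A₀ α₀ ∉ P → MCGoal P (insert A₀ α₀) A)
    (ih2 : ∀ A ∈ insert A₀ᶜ β₀, insert A₀ᶜ β₀ ∉ P → MCGoal P (insert A₀ᶜ β₀) A)
    (A : Set E) (hAmem : A ∈ α₀) (hnp : α₀ ∪ β₀ ∉ P) :
    MCGoal P (α₀ ∪ β₀) A := by
  have p1 := mergeClosure_isPartition hP m1
  have p2 := mergeClosure_isPartition hP m2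
  have hA₀ne : A₀.Nonempty := p1.1 A₀ (mem_insert _ _)
  have hAne : A.Nonempty := p1.1 A (mem_insert_of_mem _ hAmem)
  have hs1 : ∀ X ∈ α₀, X ⊆ A₀ᶜ := parts_subset_compl p1 hA₀
  have hs2 : ∀ X ∈ β₀, X ⊆ A₀ := by
    have := parts_subset_compl p2 hB₀; simpa using this
  have hAnβ : A ∉ β₀ := by
    intro hAβ
    obtain ⟨x, hx⟩ := hAne
    exact (hs1 A hAmem hx) (hs2 A hAβ hx)
  have hdiff : (α₀ ∪ β₀) \ {A} = β₀ ∪ (α₀ \ {A}) := by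
    rw [Set.union_diff_distrib, Set.diff_singleton_eq_self hAnβ, Set.union_comm]
  have hinsA : insert A (α₀ \ {A}) = α₀ := by
    rw [Set.insert_diff_singleton, Set.insert_eq_self.mpr hAmem]
  by_cases hb : β₀ = {A₀}
  · have heq : α₀ ∪ β₀ = insert A₀ α₀ := by
      rw [hb, Set.union_singleton]
    rw [heq]
    exact ih1 A (mem_insert_of_mem _ hAmem) (heq ▸ hnp)
  · -- β₀ ≠ {A₀}: insert A₀ᶜ β₀ has at least 3 parts
    have hb2 : 2 ≤ β₀.ncard := by
      by_contra h
      push_neg at h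
      obtain ⟨x, hx⟩ := hA₀ne
      have hxu : x ∈ ⋃₀ insert A₀ᶜ β₀ := p2.2.2 ▸ mem_univ x
      obtain ⟨B, hB, hxB⟩ := hxu
      rcases hB with rfl | hB
      · exact hxB hx
      · have hβne : β₀.Nonempty := ⟨B, hB⟩
        have h1 : β₀.ncard = 1 := le_antisymm (by omega) (by have := (Set.ncard_pos β₀.toFinite).mpr hβne; omega)
        obtain ⟨B', hB'⟩ := (Set.ncard_eq_one).mp h1
        have hBB : B = A₀ := by
          apply subset_antisymm (hs2 B hB)
          intro y hy
          have : y ∈ ⋃₀ insert A₀ᶜ β₀ := p2.2.2 ▸ mem_univ y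
          obtain ⟨D, hD, hyD⟩ := this
          rcases hD with rfl | hD
          · exact absurd hy hyD
          · have : D = B := by rw [hB'] at hD hB; simp at hD hB; rw [hD, hB]
            exact this ▸ hyD
        rw [hB', show B' = A₀ by rw [hB'] at hB; simp at hB; rw [← hB, hBB]] at hb
        exact hb rfl
    have hc3 : 3 ≤ (insert A₀ᶜ β₀).ncard := by
      rw [Set.ncard_insert_of_notMem hB₀ β₀.toFinite]
      omega
    by_cases hmem : insert A₀ᶜ β₀ ∈ P
    · refine ⟨β₀, α₀ \ {A}, A₀ᶜ, hB₀, hmem, hc3, ?_, hdiff⟩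
      rw [compl_compl, hinsA]
      exact m1
    · obtain ⟨γ, μ, C, hCγ, hCP, hc3', mc, heq⟩ := ih2 A₀ᶜ (mem_insert _ _) hmem
      rw [Set.insert_diff_self_of_notMem hB₀] at heq
      have hγsub : γ ⊆ β₀ := heq ▸ Set.subset_union_left
      have hμsub : μ ⊆ β₀ := heq ▸ Set.subset_union_right
      have hCA : C ≠ A₀ := by
        intro rfl_h
        have pγ := hP _ hCP
        have hγc : ∀ X ∈ γ, X ⊆ Cᶜ := parts_subset_compl pγ hCγ
        have hγe : γ = ∅ := by
          ext X
          simp only [mem_empty_iff_false, iff_false]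
          intro hX
          obtain ⟨x, hx⟩ := pγ.1 X (mem_insert_of_mem _ hX)
          exact (hγc X hX hx) (rfl_h ▸ hs2 X (hγsub hX) hx)
        rw [hγe] at hc3'
        simp [Set.ncard_singleton] at hc3'
      refine ⟨γ, μ ∪ (α₀ \ {A}), C, hCγ, hCP, hc3', ?_, ?_⟩
      · have hmerge := MergeClosure.merge (A := A₀ᶜ) (α := insert Cᶜ μ) (β := α₀)
          (by
            intro h
            rcases h with h | h
            · exact hCA (compl_injective h.symm)
            · exact hB₀ (hμsub h))
          (by rw [compl_compl]; exact hA₀)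
          (by rw [Set.insert_comm]; exact mc)
          (by rw [compl_compl]; exact m1)
        have : insert Cᶜ (insert A (μ ∪ (α₀ \ {A}))) = (insert Cᶜ μ) ∪ α₀ := by
          rw [show insert A (μ ∪ α₀ \ {A}) = μ ∪ α₀ from by rw [← Set.union_insert, hinsA], Set.insert_union]
        rw [this]
        exact hmerge
      · rw [hdiff, heq, Set.union_assoc]

lemma mergeClosure_key [Finite E] {P : Set (Set (Set E))}
    (hP : ∀ μ ∈ P, IsPartitionOf μ) {β : Set (Set E)}
    (h : MergeClosure P β) : ∀ A ∈ β, β ∉ P → MCGoal P β A := by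
  induction h with
  | base h => exact fun A _ hnp => absurd h hnp
  | @merge α₀ β₀ A₀ hA₀ hB₀ m1 m2 ih1 ih2 =>
    intro A hAmem hnp
    rcases hAmem with hA1 | hA2
    · exact keyStep hP hA₀ hB₀ m1 m2 ih1 ih2 A hA1 hnp
    · have hA₀' : (A₀ᶜ)ᶜ ∉ α₀ := by rw [compl_compl]; exact hA₀
      have m1' : MergeClosure P (insert (A₀ᶜ)ᶜ α₀) := by rw [compl_compl]; exact m1
      have ih1' : ∀ A ∈ insert (A₀ᶜ)ᶜ α₀, insert (A₀ᶜ)ᶜ α₀ ∉ P →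
          MCGoal P (insert (A₀ᶜ)ᶜ α₀) A := by rw [compl_compl]; exact ih1
      have := keyStep hP hB₀ hA₀' m2 m1' ih2 ih1' A hA2
        (by rw [Set.union_comm]; exact hnp)
      rw [Set.union_comm]
      exact this


/-- any `(α|A) ∈ P↑ \ P` is decomposed by some `(γ|C) ∈ P` with at
least three parts, via some `(Cᶜ|μ|A) ∈ P↑` with `(α|A) = (γ|μ|A)`. -/
theorem mergeClosure_decompose [Finite E]
    (P : Set (Set (Set E))) (hP : ∀ μ ∈ P, IsPartitionOf μ)
    (α : Set (Set E)) (A : Set E) (hA : A ∉ α)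
    (h1 : MergeClosure P (insert A α)) (h2 : insert A α ∉ P) :
    ∃ (γ μ : Set (Set E)) (C : Set E), C ∉ γ ∧ insert C γ ∈ P ∧
      3 ≤ (insert C γ).ncard ∧
      MergeClosure P (insert Cᶜ (insert A μ)) ∧ α = γ ∪ μ := by
  obtain ⟨γ, μ, C, h₁, h₂, h₃, h₄, h₅⟩ :=
    mergeClosure_key hP h1 A (mem_insert _ _) h2
  rw [Set.insert_diff_self_of_notMem hA] at h₅
  exact ⟨γ, μ, C, h₁, h₂, h₃, h₄, h₅⟩
end

section
/- If P is a pushing set of partitions, then P↑ is refining, and hence dualising. -/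
open Set

variable {E : Type*}

section Aux

variable {P : Set (Set (Set E))}

lemma not_mem_of_disj {s : Set (Set E)} {Z : Set E}
    (h : ∀ X ∈ s, X ∩ Z = ∅) (hZ : Z.Nonempty) : Z ∉ s := by
  intro hmem
  have := h Z hmem
  rw [Set.inter_self] at this
  exact hZ.ne_empty this

namespace PartAux

lemma part_nonempty {A : Set E} {α : Set (Set E)}
    (h : IsPartitionOf (insert A α)) : A.Nonempty :=
  h.1 A (Set.mem_insert _ _)

lemma parts_subset_compl {A : Set E} {α : Set (Set E)}
    (h : IsPartitionOf (insert A α)) (hA : A ∉ α) : ∀ X ∈ α, X ⊆ Aᶜ := by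
  intro X hX
  have hne : X ≠ A := by rintro rfl; exact hA hX
  have hd := h.2.1 (Set.mem_insert_of_mem _ hX) (Set.mem_insert _ _) hne
  intro x hx
  simp only [Set.mem_compl_iff]
  intro hxA
  exact (Set.disjoint_left.mp hd) hx hxA

lemma sUnion_rest {A : Set E} {α : Set (Set E)}
    (h : IsPartitionOf (insert A α)) (hA : A ∉ α) : ⋃₀ α = Aᶜ := by
  have hsub : ⋃₀ α ⊆ Aᶜ := by
    rw [Set.sUnion_subset_iff]; exact parts_subset_compl h hA
  apply Set.Subset.antisymm hsub
  intro x hx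
  have : x ∈ ⋃₀ insert A α := by rw [h.2.2]; trivial
  rcases this with ⟨Y, hY, hxY⟩
  rcases hY with rfl | hY
  · exact absurd hx (by simp [hxY])
  · exact ⟨Y, hY, hxY⟩

end PartAux

namespace RFAux

lemma mem_removeF {α : Set (Set E)} {F X : Set E} :
    X ∈ RemoveF α F ↔ ∃ A ∈ α, X = A \ F ∧ X.Nonempty := Iff.rfl

lemma removeF_union {α β : Set (Set E)} {F : Set E} :
    RemoveF (α ∪ β) F = RemoveF α F ∪ RemoveF β F := by
  ext X
  simp only [RemoveF, Set.mem_setOf_eq, Set.mem_union]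
  constructor
  · rintro ⟨A, hA | hA, rfl, hne⟩
    · exact Or.inl ⟨A, hA, rfl, hne⟩
    · exact Or.inr ⟨A, hA, rfl, hne⟩
  · rintro (⟨A, hA, rfl, hne⟩ | ⟨A, hA, rfl, hne⟩)
    exacts [⟨A, Or.inl hA, rfl, hne⟩, ⟨A, Or.inr hA, rfl, hne⟩]

lemma removeF_empty {α : Set (Set E)} (h : ∀ X ∈ α, X.Nonempty) :
    RemoveF α ∅ = α := by
  ext X
  simp only [RemoveF, Set.mem_setOf_eq, Set.diff_empty]
  constructor
  · rintro ⟨A, hA, rfl, _⟩; exact hA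
  · intro hX; exact ⟨X, hX, rfl, h X hX⟩

lemma removeF_removeF {α : Set (Set E)} {F G : Set E} :
    RemoveF (RemoveF α F) G = RemoveF α (F ∪ G) := by
  ext X
  simp only [RemoveF, Set.mem_setOf_eq]
  constructor
  · rintro ⟨Y, ⟨A, hA, rfl, hne⟩, rfl, hne2⟩
    exact ⟨A, hA, Set.diff_diff, hne2⟩
  · rintro ⟨A, hA, rfl, hne⟩
    refine ⟨A \ F, ⟨A, hA, rfl, ?_⟩, Set.diff_diff.symm, hne⟩
    rcases hne with ⟨x, hx⟩
    exact ⟨x, hx.1, fun h => hx.2 (Set.mem_union_left _ h)⟩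

lemma removeF_insert_of_nonempty {α : Set (Set E)} {C F : Set E} (h : (C \ F).Nonempty) :
    RemoveF (insert C α) F = insert (C \ F) (RemoveF α F) := by
  ext X
  simp only [RemoveF, Set.mem_setOf_eq, Set.mem_insert_iff]
  constructor
  · rintro ⟨A, rfl | hA, rfl, hne⟩
    · exact Or.inl rfl
    · exact Or.inr ⟨A, hA, rfl, hne⟩
  · rintro (rfl | ⟨A, hA, rfl, hne⟩)
    exacts [⟨C, Or.inl rfl, rfl, h⟩, ⟨A, Or.inr hA, rfl, hne⟩]

lemma removeF_insert_of_empty {α : Set (Set E)} {C F : Set E} (h : C \ F = ∅) :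
    RemoveF (insert C α) F = RemoveF α F := by
  ext X
  simp only [RemoveF, Set.mem_setOf_eq]
  constructor
  · rintro ⟨A, rfl | hA, rfl, hne⟩
    · exact absurd h hne.ne_empty
    · exact ⟨A, hA, rfl, hne⟩
  · rintro ⟨A, hA, rfl, hne⟩
    exact ⟨A, Set.mem_insert_of_mem _ hA, rfl, hne⟩

lemma removeF_congr {α : Set (Set E)} {W F G : Set E} (hW : ∀ X ∈ α, X ⊆ W)
    (h : F ∩ W = G ∩ W) : RemoveF α F = RemoveF α G := by
  have key : ∀ A ∈ α, A \ F = A \ G := by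
    intro A hA
    ext x
    simp only [Set.mem_diff]
    constructor
    · rintro ⟨hx, hxF⟩
      refine ⟨hx, fun hxG => hxF ?_⟩
      have : x ∈ G ∩ W := ⟨hxG, hW A hA hx⟩
      rw [← h] at this; exact this.1
    · rintro ⟨hx, hxG⟩
      refine ⟨hx, fun hxF => hxG ?_⟩
      have : x ∈ F ∩ W := ⟨hxF, hW A hA hx⟩
      rw [h] at this; exact this.1
  ext X
  simp only [RemoveF, Set.mem_setOf_eq]
  constructor
  · rintro ⟨A, hA, rfl, hne⟩; exact ⟨A, hA, key A hA, hne⟩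
  · rintro ⟨A, hA, rfl, hne⟩; exact ⟨A, hA, (key A hA).symm, hne⟩

lemma removeF_eq_empty {α : Set (Set E)} {F : Set E} (h : ∀ X ∈ α, X ⊆ F) :
    RemoveF α F = ∅ := by
  ext X
  simp only [RemoveF, Set.mem_setOf_eq, Set.mem_empty_iff_false, iff_false]
  rintro ⟨A, hA, rfl, hne⟩
  rcases hne with ⟨x, hx⟩
  exact hx.2 (h A hA hx.1)

lemma removeF_eq_self {α : Set (Set E)} {F : Set E}
    (hne : ∀ X ∈ α, X.Nonempty) (h : ∀ X ∈ α, X ∩ F = ∅) : RemoveF α F = α := by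
  have key : ∀ A ∈ α, A \ F = A := by
    intro A hA
    ext x
    simp only [Set.mem_diff, and_iff_left_iff_imp]
    intro hx hxF
    have : x ∈ A ∩ F := ⟨hx, hxF⟩
    rw [h A hA] at this; exact this
  ext X
  simp only [RemoveF, Set.mem_setOf_eq]
  constructor
  · rintro ⟨A, hA, rfl, hne2⟩; rwa [key A hA]
  · intro hX; exact ⟨X, hX, (key X hX).symm, hne X hX⟩

lemma removeF_part_subset {α : Set (Set E)} {F X : Set E} (h : X ∈ RemoveF α F) :
    ∃ A ∈ α, X ⊆ A := by
  rcases h with ⟨A, hA, rfl, _⟩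
  exact ⟨A, hA, Set.diff_subset⟩

lemma removeF_nonempty {α : Set (Set E)} {F : Set E} : ∀ X ∈ RemoveF α F, X.Nonempty := by
  rintro X ⟨A, hA, rfl, hne⟩; exact hne

end RFAux

end Aux

section Der

variable {P : Set (Set (Set E))}

/-- Explicit merge derivations, with a size. -/
inductive Der (P : Set (Set (Set E))) : Set (Set E) → Type _
  | base {μ : Set (Set E)} : μ ∈ P → Der P μ
  | merge {α β : Set (Set E)} {A : Set E} (hA : A ∉ α) (hB : Aᶜ ∉ β) :
      Der P (insert A α) → Der P (insert Aᶜ β) → Der P (α ∪ β)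

def Der.size {μ : Set (Set E)} : Der P μ → ℕ
  | Der.base _ => 1
  | Der.merge _ _ d₁ d₂ => d₁.size + d₂.size + 1

lemma Der.size_pos {μ : Set (Set E)} (d : Der P μ) : 1 ≤ d.size := by
  cases d with
  | base h => exact le_refl _
  | merge hA hB d₁ d₂ => simp [Der.size]

def Der.toMC {μ : Set (Set E)} : Der P μ → MergeClosure P μ
  | Der.base h => MergeClosure.base h
  | Der.merge hA hB d₁ d₂ => MergeClosure.merge hA hB d₁.toMC d₂.toMC

lemma MergeClosure.toDer {μ : Set (Set E)} (h : MergeClosure P μ) : Nonempty (Der P μ) := by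
  induction h with
  | base h => exact ⟨Der.base h⟩
  | merge hA hB h₁ h₂ ih₁ ih₂ => exact ⟨Der.merge hA hB ih₁.some ih₂.some⟩

lemma mc_partition {μ : Set (Set E)} (hP : ∀ μ ∈ P, IsPartitionOf μ)
    (h : MergeClosure P μ) : IsPartitionOf μ := by
  induction h with
  | base h => exact hP _ h
  | @merge α β A hA hB h₁ h₂ ih₁ ih₂ =>
    have hα : ∀ X ∈ α, X ⊆ Aᶜ := PartAux.parts_subset_compl ih₁ hA
    have hβ : ∀ X ∈ β, X ⊆ A := by
      intro X hX
      have := PartAux.parts_subset_compl ih₂ hB X hX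
      rwa [compl_compl] at this
    refine ⟨?_, ?_, ?_⟩
    · rintro X (hX | hX)
      exacts [ih₁.1 X (Set.mem_insert_of_mem _ hX), ih₂.1 X (Set.mem_insert_of_mem _ hX)]
    · rintro X (hX | hX) Y (hY | hY) hne
      · exact ih₁.2.1 (Set.mem_insert_of_mem _ hX) (Set.mem_insert_of_mem _ hY) hne
      · exact Set.disjoint_of_subset (hα X hX) (hβ Y hY) (disjoint_compl_left)
      · exact Set.disjoint_of_subset (hβ X hX) (hα Y hY) (disjoint_compl_right)
      · exact ih₂.2.1 (Set.mem_insert_of_mem _ hX) (Set.mem_insert_of_mem _ hY) hne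
    · rw [Set.sUnion_union, PartAux.sUnion_rest ih₁ hA, PartAux.sUnion_rest ih₂ hB,
        compl_compl, Set.compl_union_self]

end Der

section Push

variable {P : Set (Set (Set E))}

/-- Bounded-size derivability. -/
def EDer (P : Set (Set (Set E))) (x : Set (Set E)) (s : ℕ) : Prop :=
  ∃ d : Der P x, d.size ≤ s

lemma EDer.mono {x : Set (Set E)} {s t : ℕ} (h : EDer P x s) (hst : s ≤ t) : EDer P x t := by
  obtain ⟨d, hd⟩ := h; exact ⟨d, le_trans hd hst⟩

lemma EDer.ofBase {x : Set (Set E)} {s : ℕ} (h : x ∈ P) (hs : 1 ≤ s) : EDer P x s :=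
  ⟨Der.base h, hs⟩

lemma EDer.merge {A : Set E} {α β : Set (Set E)} {s₁ s₂ : ℕ} (hA : A ∉ α) (hB : Aᶜ ∉ β)
    (h₁ : EDer P (insert A α) s₁) (h₂ : EDer P (insert Aᶜ β) s₂) :
    EDer P (α ∪ β) (s₁ + s₂ + 1) := by
  obtain ⟨d₁, hd₁⟩ := h₁; obtain ⟨d₂, hd₂⟩ := h₂
  exact ⟨Der.merge hA hB d₁ d₂, by simp [Der.size]; omega⟩

lemma EDer.toMC {x : Set (Set E)} {s : ℕ} (h : EDer P x s) : MergeClosure P x :=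
  h.choose.toMC

lemma EDer.one_le {x : Set (Set E)} {s : ℕ} (h : EDer P x s) : 1 ≤ s :=
  le_trans h.choose.size_pos h.choose_spec

lemma mc_toEDer {x : Set (Set E)} (h : MergeClosure P x) : ∃ s, EDer P x s := by
  obtain ⟨d⟩ := h.toDer; exact ⟨d.size, d, le_refl _⟩

/-- The goal of the pushing lemma. -/
def PushGoal (P : Set (Set (Set E))) (A : Set E) (α : Set (Set E)) (B : Set E)
    (β : Set (Set E)) (sμ sν : ℕ) : Prop :=
  ∃ F : Set E, F.Nonempty ∧ F ⊆ Aᶜ ∩ Bᶜ ∧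
    (EDer P (insert (A ∪ F) (RemoveF α F)) sμ ∨ EDer P (insert (B ∪ F) (RemoveF β F)) sν)

lemma PushGoal.symm {A B : Set E} {α β : Set (Set E)} {sμ sν : ℕ}
    (h : PushGoal P B β A α sν sμ) : PushGoal P A α B β sμ sν := by
  obtain ⟨F, h1, h2, h3⟩ := h
  exact ⟨F, h1, by rwa [Set.inter_comm], h3.symm⟩

lemma PushGoal.mono {A B : Set E} {α β : Set (Set E)} {sμ sν sμ' sν' : ℕ}
    (h : PushGoal P A α B β sμ sν) (h1 : sμ ≤ sμ') (h2 : sν ≤ sν') :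
    PushGoal P A α B β sμ' sν' := by
  obtain ⟨F, ha, hb, hc⟩ := h
  exact ⟨F, ha, hb, hc.imp (fun h => h.mono h1) (fun h => h.mono h2)⟩

end Push

section Core

variable {P : Set (Set (Set E))}

lemma pushMC_core [Finite E] (hP : ∀ μ ∈ P, IsPartitionOf μ) {n : ℕ}
    (IH : ∀ (sμ sν : ℕ) (A : Set E) (α : Set (Set E)) (B : Set E) (β : Set (Set E)),
      EDer P (insert A α) sμ → EDer P (insert B β) sν → sμ + sν < n →
      A ∉ α → B ∉ β → (Aᶜ ∩ Bᶜ).Nonempty → PushGoal P A α B β sμ sν)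
    {C : Set E} {γ δ : Set (Set E)} (hCγ : C ∉ γ) (hCδ : Cᶜ ∉ δ)
    {s₁ s₂ sν : ℕ} (e₁ : EDer P (insert C γ) s₁) (e₂ : EDer P (insert Cᶜ δ) s₂)
    {A : Set E} (hAδ : A ∈ δ) {B : Set E} {β : Set (Set E)}
    (eν : EDer P (insert B β) sν) (hB : B ∉ β)
    (hn : s₁ + s₂ + 1 + sν ≤ n) (hreg : (Aᶜ ∩ Bᶜ).Nonempty) :
    PushGoal P A ((γ ∪ δ) \ {A}) B β (s₁ + s₂ + 1) sν := by
  classical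
  set R : Set E := Aᶜ ∩ Bᶜ with hRdef
  have pγ : IsPartitionOf (insert C γ) := mc_partition hP e₁.toMC
  have pδ : IsPartitionOf (insert Cᶜ δ) := mc_partition hP e₂.toMC
  have pν : IsPartitionOf (insert B β) := mc_partition hP eν.toMC
  have hδsub : ∀ X ∈ δ, X ⊆ C := by
    intro X hX
    have := PartAux.parts_subset_compl pδ hCδ X hX
    rwa [compl_compl] at this
  have hγsub : ∀ X ∈ γ, X ⊆ Cᶜ := PartAux.parts_subset_compl pγ hCγ
  have hAC : A ⊆ C := hδsub A hAδ
  have hAne : A.Nonempty := pδ.1 A (Set.mem_insert_of_mem _ hAδ)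
  have hCne : C.Nonempty := pγ.1 C (Set.mem_insert _ _)
  have hCcne : Cᶜ.Nonempty := pδ.1 Cᶜ (Set.mem_insert _ _)
  have hγne : ∀ X ∈ γ, X.Nonempty := fun X hX => pγ.1 X (Set.mem_insert_of_mem _ hX)
  have hδne : ∀ X ∈ δ, X.Nonempty := fun X hX => pδ.1 X (Set.mem_insert_of_mem _ hX)
  have hAγ : A ∉ γ := by
    intro h
    rcases hAne with ⟨x, hx⟩
    exact (hγsub A h hx) (hAC hx)
  have hα : (γ ∪ δ) \ {A} = γ ∪ (δ \ {A}) := by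
    ext X
    simp only [Set.mem_diff, Set.mem_union, Set.mem_singleton_iff]
    constructor
    · rintro ⟨h | h, hne⟩
      exacts [Or.inl h, Or.inr ⟨h, hne⟩]
    · rintro (h | ⟨h, hne⟩)
      · exact ⟨Or.inl h, fun he => hAγ (he ▸ h)⟩
      · exact ⟨Or.inr h, hne⟩
  have hCA : Cᶜ ⊆ Aᶜ := Set.compl_subset_compl.mpr hAC
  -- the two families of intermediate partitions
  set ρ : Set E → Set (Set E) :=
    fun H => insert (A ∪ H) (RemoveF (insert Cᶜ (δ \ {A})) H) with hρdef
  set σ : Set E → Set (Set E) := fun G => insert (C ∪ G) (RemoveF γ G) with hσdef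
  -- decomposition facts
  have hρdecomp : ∀ H : Set E, (A ∪ H) ∉ RemoveF (insert Cᶜ (δ \ {A})) H := by
    intro H
    apply not_mem_of_disj
    · rintro X ⟨D, hD, rfl, hne⟩
      have hDA : D ∩ A = ∅ := by
        rcases hD with rfl | ⟨hDδ, hDA⟩
        · apply Set.eq_empty_of_subset_empty
          intro x hx
          exact hx.1 (hAC hx.2)
        · apply Set.eq_empty_of_subset_empty
          intro x hx
          have hne' : D ≠ A := hDA
          have hd := pδ.2.1 (Set.mem_insert_of_mem _ hDδ) (Set.mem_insert_of_mem _ hAδ) hne'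
          exact absurd hx.2 (Set.disjoint_left.mp hd hx.1)
      apply Set.eq_empty_of_subset_empty
      rintro x ⟨⟨hxD, hxH⟩, hx⟩
      rcases hx with hx | hx
      · rw [← hDA]; exact ⟨hxD, hx⟩
      · exact absurd hx hxH
    · exact hAne.mono Set.subset_union_left
  have hσdecomp : ∀ G : Set E, (C ∪ G) ∉ RemoveF γ G := by
    intro G
    apply not_mem_of_disj
    · rintro X ⟨Y, hY, rfl, hne⟩
      apply Set.eq_empty_of_subset_empty
      rintro x ⟨⟨hxY, hxG⟩, hx⟩
      rcases hx with hx | hx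
      · exact (hγsub Y hY hxY) hx
      · exact hxG hx
    · exact hCne.mono Set.subset_union_left
  set GOAL : Prop := PushGoal P A ((γ ∪ δ) \ {A}) B β (s₁ + s₂ + 1) sν with hGOAL
  -- After phase 1 is complete (H = R):
  have phase1done : EDer P (ρ R) s₂ → GOAL := by
    intro dH
    by_cases hCB : (Cᶜ ∩ B).Nonempty
    · -- phases 2 and 3
      have e2' : Cᶜ \ R = Cᶜ ∩ B := by
        ext x
        simp only [Set.mem_diff, hRdef, Set.mem_inter_iff, Set.mem_compl_iff, not_and, not_not]
        constructor
        · rintro ⟨hc, h⟩; exact ⟨hc, h (fun hA' => hc (hAC hA'))⟩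
        · rintro ⟨hc, hb⟩; exact ⟨hc, fun _ => hb⟩
      set G₀ : Set E := Cᶜ ∩ Bᶜ with hG₀
      have phase3 : EDer P (σ G₀) s₁ → GOAL := by
        intro dG
        have eC : (C ∪ G₀)ᶜ = Cᶜ ∩ B := by
          rw [Set.compl_union, hG₀, Set.compl_inter, compl_compl, compl_compl,
            Set.inter_union_distrib_left]
          simp
        have e3 : RemoveF γ G₀ = RemoveF γ R := by
          apply RFAux.removeF_congr hγsub
          rw [hG₀, hRdef]
          ext x
          simp only [Set.mem_inter_iff, Set.mem_compl_iff]
          constructor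
          · rintro ⟨⟨_, hb⟩, hc⟩; exact ⟨⟨fun ha => hc (hAC ha), hb⟩, hc⟩
          · rintro ⟨⟨_, hb⟩, hc⟩; exact ⟨⟨hc, hb⟩, hc⟩
        have eρ : ρ R = insert (C ∪ G₀)ᶜ (insert (A ∪ R) (RemoveF (δ \ {A}) R)) := by
          rw [hρdef]
          simp only
          rw [RFAux.removeF_insert_of_nonempty (by rw [e2']; exact hCB), e2', ← eC,
            Set.insert_comm]
        -- merge
        have hmA : (C ∪ G₀) ∉ RemoveF γ G₀ := hσdecomp G₀
        have hmB : (C ∪ G₀)ᶜ ∉ insert (A ∪ R) (RemoveF (δ \ {A}) R) := by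
          rw [eC]
          apply not_mem_of_disj
          · rintro X (rfl | ⟨D, ⟨hDδ, _⟩, rfl, hne⟩)
            · apply Set.eq_empty_of_subset_empty
              rintro x ⟨hx, hc, hb⟩
              rcases hx with hx | hx
              · exact hc (hAC hx)
              · exact hx.2 hb
            · apply Set.eq_empty_of_subset_empty
              rintro x ⟨⟨hxD, _⟩, hc, _⟩
              exact hc (hδsub D hDδ hxD)
          · exact hCB
        have dmerge : EDer P (RemoveF γ G₀ ∪ insert (A ∪ R) (RemoveF (δ \ {A}) R))
            (s₁ + s₂ + 1) := by
          apply EDer.merge hmA hmB dG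
          rw [← eρ]; exact dH
        rw [Set.union_insert, e3, ← RFAux.removeF_union, ← hα] at dmerge
        exact ⟨R, hreg, le_refl _, Or.inl dmerge⟩
      -- phase 2: grow G
      have phase2 : ∀ k (G : Set E), G ⊆ G₀ → (G₀ \ G).ncard ≤ k →
          EDer P (σ G) s₁ → GOAL := by
        intro k
        induction k with
        | zero =>
          intro G hsub hcard dG
          have hGe : G₀ \ G = ∅ := by
            rw [← Set.ncard_eq_zero (Set.toFinite _)]; omega
          have : G = G₀ := Set.Subset.antisymm hsub (Set.diff_eq_empty.mp hGe)
          exact phase3 (this ▸ dG)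
        | succ k ih =>
          intro G hsub hcard dG
          by_cases hGe : G₀ \ G = ∅
          · have : G = G₀ := Set.Subset.antisymm hsub (Set.diff_eq_empty.mp hGe)
            exact phase3 (this ▸ dG)
          · have hregG : ((C ∪ G)ᶜ ∩ Bᶜ).Nonempty := by
              rw [Set.compl_union]
              obtain ⟨x, hx⟩ := Set.nonempty_iff_ne_empty.mpr hGe
              exact ⟨x, ⟨hx.1.1, hx.2⟩, hx.1.2⟩
            obtain ⟨F, hFne, hFsub, hcase⟩ :=
              IH s₁ sν (C ∪ G) (RemoveF γ G) B β dG eν (by omega) (hσdecomp G) hB hregG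
            rcases hcase with hl | hr
            · -- grow G
              rw [RFAux.removeF_removeF, Set.union_assoc] at hl
              have hFG₀ : F ⊆ G₀ \ G := by
                intro x hx
                have := hFsub hx
                rw [Set.compl_union] at this
                exact ⟨⟨this.1.1, this.2⟩, this.1.2⟩
              apply ih (G ∪ F) (Set.union_subset hsub (fun x hx => (hFG₀ hx).1))
              · have hss : G₀ \ (G ∪ F) ⊂ G₀ \ G := by
                  constructor
                  · rintro x ⟨h1, h2⟩
                    exact ⟨h1, fun h => h2 (Or.inl h)⟩
                  · intro hcon
                    obtain ⟨f, hf⟩ := hFne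
                    have := hcon (hFG₀ hf)
                    exact this.2 (Or.inr hf)
                have := Set.ncard_lt_ncard hss (Set.toFinite _)
                omega
              · exact hl
            · -- push into ν : done
              refine ⟨F, hFne, ?_, Or.inr hr⟩
              intro x hx
              have := hFsub hx
              rw [Set.compl_union] at this
              exact ⟨hCA this.1.1, this.2⟩
      apply phase2 ((G₀ \ ∅).ncard) ∅ (Set.empty_subset _) (le_refl _)
      have : σ (∅ : Set E) = insert C γ := by
        rw [hσdef]
        simp only [Set.union_empty]
        rw [RFAux.removeF_empty hγne]
      rw [this]; exact e₁
    · -- Cᶜ ∩ B = ∅ : direct conclusion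
      have hCR : Cᶜ ⊆ R := by
        intro x hx
        refine ⟨fun hA' => hx (hAC hA'), fun hB' => hCB ⟨x, hx, hB'⟩⟩
      have eρ : ρ R = insert (A ∪ R) (RemoveF ((γ ∪ δ) \ {A}) R) := by
        rw [hρdef]
        simp only
        rw [RFAux.removeF_insert_of_empty (Set.diff_eq_empty.mpr hCR), hα,
          RFAux.removeF_union, RFAux.removeF_eq_empty (fun X hX => (hγsub X hX).trans hCR),
          Set.empty_union]
      rw [eρ] at dH
      exact ⟨R, hreg, le_refl _, Or.inl (dH.mono (by omega))⟩
  -- phase 1 : grow H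
  have phase1 : ∀ k (H : Set E), H ⊆ R → (R \ H).ncard ≤ k →
      EDer P (ρ H) s₂ → GOAL := by
    intro k
    induction k with
    | zero =>
      intro H hsub hcard dH
      have hHe : R \ H = ∅ := by
        rw [← Set.ncard_eq_zero (Set.toFinite _)]; omega
      have : H = R := Set.Subset.antisymm hsub (Set.diff_eq_empty.mp hHe)
      exact phase1done (this ▸ dH)
    | succ k ih =>
      intro H hsub hcard dH
      by_cases hHe : R \ H = ∅
      · have : H = R := Set.Subset.antisymm hsub (Set.diff_eq_empty.mp hHe)
        exact phase1done (this ▸ dH)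
      · have hregH : ((A ∪ H)ᶜ ∩ Bᶜ).Nonempty := by
          obtain ⟨x, hx⟩ := Set.nonempty_iff_ne_empty.mpr hHe
          rw [Set.compl_union]
          exact ⟨x, ⟨hx.1.1, hx.2⟩, hx.1.2⟩
        obtain ⟨F, hFne, hFsub, hcase⟩ :=
          IH s₂ sν (A ∪ H) (RemoveF (insert Cᶜ (δ \ {A})) H) B β dH eν (by omega)
            (hρdecomp H) hB hregH
        rcases hcase with hl | hr
        · rw [RFAux.removeF_removeF, Set.union_assoc] at hl
          have hFR : F ⊆ R \ H := by
            intro x hx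
            have := hFsub hx
            rw [Set.compl_union] at this
            exact ⟨⟨this.1.1, this.2⟩, this.1.2⟩
          apply ih (H ∪ F) (Set.union_subset hsub (fun x hx => (hFR hx).1))
          · have hss : R \ (H ∪ F) ⊂ R \ H := by
              constructor
              · rintro x ⟨h1, h2⟩
                exact ⟨h1, fun h => h2 (Or.inl h)⟩
              · intro hcon
                obtain ⟨f, hf⟩ := hFne
                have := hcon (hFR hf)
                exact this.2 (Or.inr hf)
            have := Set.ncard_lt_ncard hss (Set.toFinite _)
            omega
          · exact hl
        · refine ⟨F, hFne, ?_, Or.inr hr⟩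
          intro x hx
          have := hFsub hx
          rw [Set.compl_union] at this
          exact ⟨this.1.1, this.2⟩
  apply phase1 ((R \ ∅).ncard) ∅ (Set.empty_subset _) (le_refl _)
  have hρ0 : ρ (∅ : Set E) = insert Cᶜ δ := by
    rw [hρdef]
    simp only [Set.union_empty]
    rw [RFAux.removeF_empty (by rintro X (rfl | ⟨hX, _⟩); exacts [hCcne, hδne _ hX]),
      Set.insert_comm, Set.insert_diff_singleton, Set.insert_eq_self.mpr hAδ]
  rw [hρ0]
  exact e₂

end Core

section Main

variable {P : Set (Set (Set E))}

lemma pushMC_mergecase [Finite E] (hP : ∀ μ ∈ P, IsPartitionOf μ) {n : ℕ}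
    (IH : ∀ (sμ sν : ℕ) (A : Set E) (α : Set (Set E)) (B : Set E) (β : Set (Set E)),
      EDer P (insert A α) sμ → EDer P (insert B β) sν → sμ + sν < n →
      A ∉ α → B ∉ β → (Aᶜ ∩ Bᶜ).Nonempty → PushGoal P A α B β sμ sν)
    {C : Set E} {γ δ : Set (Set E)} (hCγ : C ∉ γ) (hCδ : Cᶜ ∉ δ)
    {s₁ s₂ sν : ℕ} (e₁ : EDer P (insert C γ) s₁) (e₂ : EDer P (insert Cᶜ δ) s₂)
    {A : Set E} (hAmem : A ∈ γ ∪ δ) {B : Set E} {β : Set (Set E)}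
    (eν : EDer P (insert B β) sν) (hB : B ∉ β)
    (hn : s₁ + s₂ + 1 + sν ≤ n) (hreg : (Aᶜ ∩ Bᶜ).Nonempty) :
    PushGoal P A ((γ ∪ δ) \ {A}) B β (s₁ + s₂ + 1) sν := by
  rcases hAmem with hAγ | hAδ
  · have hCγ' : (Cᶜ)ᶜ ∉ γ := by rwa [compl_compl]
    have e₁' : EDer P (insert (Cᶜ)ᶜ γ) s₁ := by rwa [compl_compl]
    have h := pushMC_core hP IH hCδ hCγ' e₂ e₁' hAγ eν hB (by omega) hreg
    rw [Set.union_comm δ γ] at h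
    exact h.mono (by omega) (le_refl _)
  · exact pushMC_core hP IH hCγ hCδ e₁ e₂ hAδ eν hB hn hreg

lemma pushMC_aux [Finite E] (hP : ∀ μ ∈ P, IsPartitionOf μ) (hpush : Pushing P) :
    ∀ (n sμ sν : ℕ) (μ ν : Set (Set E)) (A : Set E) (α : Set (Set E)) (B : Set E)
      (β : Set (Set E)), EDer P μ sμ → EDer P ν sν → μ = insert A α → ν = insert B β →
      sμ + sν ≤ n →
      A ∉ α → B ∉ β → (Aᶜ ∩ Bᶜ).Nonempty → PushGoal P A α B β sμ sν := by
  intro n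
  induction n using Nat.strong_induction_on with
  | _ n IHn =>
  intro sμ sν μ ν A α B β eμ eν hμeq hνeq hn hA hB hreg
  have IH : ∀ (sμ' sν' : ℕ) (A' : Set E) (α' : Set (Set E)) (B' : Set E) (β' : Set (Set E)),
      EDer P (insert A' α') sμ' → EDer P (insert B' β') sν' → sμ' + sν' < n →
      A' ∉ α' → B' ∉ β' → (A'ᶜ ∩ B'ᶜ).Nonempty → PushGoal P A' α' B' β' sμ' sν' := by
    intro sμ' sν' A' α' B' β' h1 h2 h3 h4 h5 h6
    exact IHn (sμ' + sν') h3 sμ' sν' _ _ A' α' B' β' h1 h2 rfl rfl (le_refl _) h4 h5 h6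
  obtain ⟨dμ, hdμ⟩ := eμ
  cases dμ with
  | base hme =>
    rw [hμeq] at hme
    obtain ⟨dν, hdν⟩ := eν
    cases dν with
    | base hne' =>
      rw [hνeq] at hne'
      obtain ⟨F, h1, h2, h3⟩ := hpush α β A B hA hB hme hne' hreg
      refine ⟨F, h1, h2,
        h3.imp (fun h => EDer.ofBase h ?_) (fun h => EDer.ofBase h ?_)⟩
      · simpa [Der.size] using hdμ
      · simpa [Der.size] using hdν
    | @merge γ δ C hCγ hCδ d₁ d₂ =>
      have heq : insert B β = γ ∪ δ := hνeq.symm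
      have hBmem : B ∈ γ ∪ δ := by rw [← heq]; exact Set.mem_insert _ _
      have hβ : β = (γ ∪ δ) \ {B} := by
        rw [← heq, Set.insert_diff_self_of_notMem hB]
      have hregs : (Bᶜ ∩ Aᶜ).Nonempty := by rwa [Set.inter_comm]
      have h := pushMC_mergecase hP IH hCγ hCδ ⟨d₁, le_refl _⟩ ⟨d₂, le_refl _⟩ hBmem
        (EDer.ofBase hme (le_refl 1)) hA
        (by simp [Der.size] at hdν hdμ; omega) hregs
      rw [← hβ] at h
      exact (h.symm).mono (by simpa [Der.size] using hdμ)
        (by simp [Der.size] at hdν; omega)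
  | @merge γ δ C hCγ hCδ d₁ d₂ =>
    have heq : insert A α = γ ∪ δ := hμeq.symm
    have hAmem : A ∈ γ ∪ δ := by rw [← heq]; exact Set.mem_insert _ _
    have hα : α = (γ ∪ δ) \ {A} := by
      rw [← heq, Set.insert_diff_self_of_notMem hA]
    rw [hνeq] at eν
    have h := pushMC_mergecase hP IH hCγ hCδ ⟨d₁, le_refl _⟩ ⟨d₂, le_refl _⟩ hAmem eν hB
      (by simp [Der.size] at hdμ; omega) hreg
    rw [← hα] at h
    exact h.mono (by simpa [Der.size] using hdμ) (le_refl _)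

lemma pushMC [Finite E] (hP : ∀ μ ∈ P, IsPartitionOf μ) (hpush : Pushing P)
    {sμ sν : ℕ} {A : Set E} {α : Set (Set E)} {B : Set E} {β : Set (Set E)}
    (eμ : EDer P (insert A α) sμ) (eν : EDer P (insert B β) sν)
    (hA : A ∉ α) (hB : B ∉ β) (hreg : (Aᶜ ∩ Bᶜ).Nonempty) :
    PushGoal P A α B β sμ sν :=
  pushMC_aux hP hpush (sμ + sν) sμ sν _ _ A α B β eμ eν rfl rfl (le_refl _) hA hB hreg

end Main

section Refine

variable {P : Set (Set (Set E))}

lemma weakRefine_empty {A B : Set E} {α β : Set (Set E)}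
    (hμ : MergeClosure P (insert A α)) (hν : MergeClosure P (insert B β))
    (hA : A ∉ α) (hB : B ∉ β) (hAB : A ∩ B = ∅) (hreg : Aᶜ ∩ Bᶜ = ∅) :
    MergeClosure P (α ∪ β) := by
  have hBA : B = Aᶜ := by
    ext x
    constructor
    · intro hx hxA
      have : x ∈ A ∩ B := ⟨hxA, hx⟩
      rw [hAB] at this; exact this
    · intro hx
      by_contra hxB
      have : x ∈ Aᶜ ∩ Bᶜ := ⟨hx, hxB⟩
      rw [hreg] at this; exact this
  rw [hBA] at hB hν
  exact MergeClosure.merge hA hB hμ hν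

lemma pushed_not_mem {A F : Set E} {α : Set (Set E)} (hsub : ∀ X ∈ α, X ⊆ Aᶜ)
    (hAne : A.Nonempty) : (A ∪ F) ∉ RemoveF α F := by
  apply not_mem_of_disj
  · rintro X ⟨Y, hY, rfl, hne⟩
    apply Set.eq_empty_of_subset_empty
    rintro x ⟨⟨hxY, hxF⟩, hx⟩
    rcases hx with hx | hx
    · exact (hsub Y hY hxY) hx
    · exact hxF hx
  · exact hAne.mono Set.subset_union_left

lemma weakRefine_aux [Finite E] (hP : ∀ μ ∈ P, IsPartitionOf μ) (hpush : Pushing P) :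
    ∀ (m : ℕ) (A : Set E) (α : Set (Set E)) (B : Set E) (β : Set (Set E)) (sμ sν : ℕ),
      EDer P (insert A α) sμ → EDer P (insert B β) sν → A ∉ α → B ∉ β → A ∩ B = ∅ →
      (Aᶜ ∩ Bᶜ).ncard ≤ m →
      ∃ lam, MergeClosure P lam ∧ ∀ X ∈ lam, ∃ D ∈ α ∪ β, X ⊆ D := by
  intro m
  induction m with
  | zero =>
    intro A α B β sμ sν eμ eν hA hB hAB hcard
    have hreg : Aᶜ ∩ Bᶜ = ∅ := by
      rw [← Set.ncard_eq_zero (Set.toFinite _)]; omega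
    exact ⟨α ∪ β, weakRefine_empty eμ.toMC eν.toMC hA hB hAB hreg,
      fun X hX => ⟨X, hX, le_refl _⟩⟩
  | succ m ih =>
    intro A α B β sμ sν eμ eν hA hB hAB hcard
    by_cases hreg : Aᶜ ∩ Bᶜ = ∅
    · exact ⟨α ∪ β, weakRefine_empty eμ.toMC eν.toMC hA hB hAB hreg,
        fun X hX => ⟨X, hX, le_refl _⟩⟩
    · have hregne : (Aᶜ ∩ Bᶜ).Nonempty := Set.nonempty_iff_ne_empty.mpr hreg
      have pμ : IsPartitionOf (insert A α) := mc_partition hP eμ.toMC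
      have pν : IsPartitionOf (insert B β) := mc_partition hP eν.toMC
      obtain ⟨F, hFne, hFsub, hcase⟩ := pushMC hP hpush eμ eν hA hB hregne
      rcases hcase with hl | hr
      · -- pushed into A
        have hA' : (A ∪ F) ∉ RemoveF α F :=
          pushed_not_mem (PartAux.parts_subset_compl pμ hA) (PartAux.part_nonempty pμ)
        have hAB' : (A ∪ F) ∩ B = ∅ := by
          apply Set.eq_empty_of_subset_empty
          rintro x ⟨hx | hx, hxB⟩
          · have hmem : x ∈ A ∩ B := ⟨hx, hxB⟩
            rw [hAB] at hmem
            exact (Set.mem_empty_iff_false x).mp hmem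
          · exact (hFsub hx).2 hxB
        have hss : (A ∪ F)ᶜ ∩ Bᶜ ⊂ Aᶜ ∩ Bᶜ := by
          rw [Set.compl_union]
          constructor
          · rintro x ⟨⟨h1, _⟩, h2⟩; exact ⟨h1, h2⟩
          · intro hcon
            obtain ⟨f, hf⟩ := hFne
            have := hcon (hFsub hf)
            exact this.1.2 hf
        have hcard2 : ((A ∪ F)ᶜ ∩ Bᶜ).ncard ≤ m := by
          have := Set.ncard_lt_ncard hss (Set.toFinite _)
          omega
        obtain ⟨lam, hlam, hsub⟩ := ih (A ∪ F) (RemoveF α F) B β sμ sν hl eν hA' hB hAB' hcard2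
        refine ⟨lam, hlam, fun X hX => ?_⟩
        obtain ⟨D, hD, hXD⟩ := hsub X hX
        rcases hD with hD | hD
        · obtain ⟨D₀, hD₀, hDsub⟩ := RFAux.removeF_part_subset hD
          exact ⟨D₀, Or.inl hD₀, hXD.trans hDsub⟩
        · exact ⟨D, Or.inr hD, hXD⟩
      · -- pushed into B
        have hB' : (B ∪ F) ∉ RemoveF β F :=
          pushed_not_mem (PartAux.parts_subset_compl pν hB) (PartAux.part_nonempty pν)
        have hAB' : A ∩ (B ∪ F) = ∅ := by
          apply Set.eq_empty_of_subset_empty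
          rintro x ⟨hxA, hx | hx⟩
          · have hmem : x ∈ A ∩ B := ⟨hxA, hx⟩
            rw [hAB] at hmem
            exact (Set.mem_empty_iff_false x).mp hmem
          · exact (hFsub hx).1 hxA
        have hss : Aᶜ ∩ (B ∪ F)ᶜ ⊂ Aᶜ ∩ Bᶜ := by
          rw [Set.compl_union]
          constructor
          · rintro x ⟨h1, h2, _⟩; exact ⟨h1, h2⟩
          · intro hcon
            obtain ⟨f, hf⟩ := hFne
            have := hcon (hFsub hf)
            exact this.2.2 hf
        have hcard2 : (Aᶜ ∩ (B ∪ F)ᶜ).ncard ≤ m := by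
          have := Set.ncard_lt_ncard hss (Set.toFinite _)
          omega
        obtain ⟨lam, hlam, hsub⟩ := ih A α (B ∪ F) (RemoveF β F) sμ sν eμ hr hA hB' hAB' hcard2
        refine ⟨lam, hlam, fun X hX => ?_⟩
        obtain ⟨D, hD, hXD⟩ := hsub X hX
        rcases hD with hD | hD
        · exact ⟨D, Or.inl hD, hXD⟩
        · obtain ⟨D₀, hD₀, hDsub⟩ := RFAux.removeF_part_subset hD
          exact ⟨D₀, Or.inr hD₀, hXD.trans hDsub⟩

lemma weakRefine [Finite E] (hP : ∀ μ ∈ P, IsPartitionOf μ) (hpush : Pushing P)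
    {A B : Set E} {α β : Set (Set E)}
    (hμ : MergeClosure P (insert A α)) (hν : MergeClosure P (insert B β))
    (hA : A ∉ α) (hB : B ∉ β) (hAB : A ∩ B = ∅) :
    ∃ lam, MergeClosure P lam ∧ ∀ X ∈ lam, ∃ D ∈ α ∪ β, X ⊆ D := by
  obtain ⟨sμ, eμ⟩ := mc_toEDer hμ
  obtain ⟨sν, eν⟩ := mc_toEDer hν
  exact weakRefine_aux hP hpush ((Aᶜ ∩ Bᶜ).ncard) A α B β sμ sν eμ eν hA hB hAB (le_refl _)

end Refine

section FinerLemma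

/-- Pieces of the members of `T` cut along the partition `ν`. -/
def PiecesOf (ν T : Set (Set E)) : Set (Set E) :=
  {X | ∃ D ∈ T, ∃ G ∈ ν, X = G ∩ D ∧ X.Nonempty}

def TraceOf (ν : Set (Set E)) (D : Set E) : Set (Set E) :=
  {X | ∃ G ∈ ν, X = G ∩ D ∧ X.Nonempty}

/-- Total size measure of a finite family of finite sets. -/
noncomputable def Msr (J : Set (Set E)) : ℕ :=
  ({p : Set E × E | p.1 ∈ J ∧ p.2 ∈ p.1}).ncard + J.ncard

lemma Msr_mono [Finite E] {J J' : Set (Set E)} (h : J ⊆ J') : Msr J ≤ Msr J' := by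
  unfold Msr
  have h1 : {p : Set E × E | p.1 ∈ J ∧ p.2 ∈ p.1} ⊆ {p : Set E × E | p.1 ∈ J' ∧ p.2 ∈ p.1} :=
    fun p hp => ⟨h hp.1, hp.2⟩
  have := Set.ncard_le_ncard h1 (Set.toFinite _)
  have := Set.ncard_le_ncard h (Set.toFinite _)
  omega

lemma sig_singleton [Finite E] (Y : Set E) :
    {p : Set E × E | p.1 ∈ ({Y} : Set (Set E)) ∧ p.2 ∈ p.1} = (fun e => (Y, e)) '' Y := by
  ext ⟨Z, e⟩
  simp only [Set.mem_setOf_eq, Set.mem_singleton_iff, Set.mem_image, Prod.mk.injEq]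
  constructor
  · rintro ⟨rfl, he⟩; exact ⟨e, he, rfl, rfl⟩
  · rintro ⟨x, hx, rfl, rfl⟩; exact ⟨rfl, hx⟩

lemma Msr_insert [Finite E] (Y : Set E) (J : Set (Set E)) :
    Msr (insert Y J) ≤ Msr J + Y.ncard + 1 := by
  unfold Msr
  have h1 : {p : Set E × E | p.1 ∈ insert Y J ∧ p.2 ∈ p.1} ⊆
      {p : Set E × E | p.1 ∈ J ∧ p.2 ∈ p.1} ∪ (fun e => (Y, e)) '' Y := by
    rintro ⟨Z, e⟩ ⟨hZ, he⟩
    rcases hZ with rfl | hZ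
    · exact Or.inr ⟨e, he, rfl⟩
    · exact Or.inl ⟨hZ, he⟩
  have h2 := Set.ncard_le_ncard h1 (Set.toFinite _)
  have h3 := Set.ncard_union_le ({p : Set E × E | p.1 ∈ J ∧ p.2 ∈ p.1}) ((fun e => (Y, e)) '' Y)
  have h4 : ((fun e => (Y, e)) '' Y).ncard = Y.ncard :=
    Set.ncard_image_of_injective _ (fun a b hab => by simpa using hab)
  have h5 := Set.ncard_insert_le Y J
  omega

lemma Msr_diff [Finite E] {J : Set (Set E)} {X : Set E} (hX : X ∈ J) :
    Msr (J \ {X}) + X.ncard + 1 = Msr J := by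
  unfold Msr
  have h1 : {p : Set E × E | p.1 ∈ J ∧ p.2 ∈ p.1} =
      {p : Set E × E | p.1 ∈ J \ {X} ∧ p.2 ∈ p.1} ∪ (fun e => (X, e)) '' X := by
    ext ⟨Z, e⟩
    simp only [Set.mem_setOf_eq, Set.mem_union, Set.mem_diff, Set.mem_singleton_iff,
      Set.mem_image, Prod.mk.injEq]
    constructor
    · rintro ⟨hZ, he⟩
      by_cases hZX : Z = X
      · subst hZX; exact Or.inr ⟨e, he, rfl, rfl⟩
      · exact Or.inl ⟨⟨hZ, hZX⟩, he⟩
    · rintro (⟨⟨hZ, _⟩, he⟩ | ⟨x, hx, rfl, rfl⟩)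
      · exact ⟨hZ, he⟩
      · exact ⟨hX, hx⟩
  have hdisj : Disjoint {p : Set E × E | p.1 ∈ J \ {X} ∧ p.2 ∈ p.1} ((fun e => (X, e)) '' X) := by
    rw [Set.disjoint_left]
    rintro ⟨Z, e⟩ ⟨hZ, _⟩ ⟨x, hx, hxe⟩
    have : Z = X := (Prod.mk.injEq _ _ _ _ ▸ hxe).1.symm
    exact hZ.2 this
  have h2 := Set.ncard_union_eq hdisj (Set.toFinite _) (Set.toFinite _)
  have h4 : ((fun e => (X, e)) '' X).ncard = X.ncard :=
    Set.ncard_image_of_injective _ (fun a b hab => by simpa using hab)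
  have h5 : (J \ {X}).ncard + 1 = J.ncard := Set.ncard_diff_singleton_add_one hX (Set.toFinite _)
  rw [h1, h2, h4]
  omega

lemma delsteps_to_target [Finite E] {ν : Set (Set E)} :
    ∀ (k : ℕ) (Φ : Set (Set E)), ν ⊆ Φ → (∀ X ∈ Φ, X.Nonempty) → Msr (Φ \ ν) ≤ k →
    Relation.ReflTransGen DelStep Φ ν := by
  intro k
  induction k with
  | zero =>
    intro Φ hsub hne hm
    have h0 : (Φ \ ν).ncard = 0 := by unfold Msr at hm; omega
    rw [Set.ncard_eq_zero (Set.toFinite _)] at h0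
    have : Φ = ν := Set.Subset.antisymm (by
      intro x hx
      by_contra hxν
      exact absurd h0 (Set.nonempty_iff_ne_empty.mp ⟨x, hx, hxν⟩)) hsub
    rw [this]
  | succ k ih =>
    intro Φ hsub hne hm
    by_cases hJ : Φ \ ν = ∅
    · have : Φ = ν := Set.Subset.antisymm (by
        intro x hx
        by_contra hxν
        exact absurd hJ (Set.nonempty_iff_ne_empty.mp ⟨x, hx, hxν⟩)) hsub
      rw [this]
    · obtain ⟨X, hXΦ, hXν⟩ := Set.nonempty_iff_ne_empty.mpr hJ
      obtain ⟨b, hb⟩ := hne X hXΦ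
      set Φ' : Set (Set E) := (Φ \ {X}) ∪ {Z | Z = X \ {b} ∧ Z.Nonempty} with hΦ'
      have hstep : DelStep Φ Φ' := ⟨X, hXΦ, b, hb, rfl⟩
      have hsub' : ν ⊆ Φ' := by
        intro Y hY
        exact Or.inl ⟨hsub hY, fun h => hXν (h ▸ hY)⟩
      have hne' : ∀ Y ∈ Φ', Y.Nonempty := by
        rintro Y (⟨hY, _⟩ | ⟨_, hYne⟩)
        exacts [hne Y hY, hYne]
      have hm' : Msr (Φ' \ ν) ≤ k := by
        have hJsub : Φ' \ ν ⊆ insert (X \ {b}) ((Φ \ ν) \ {X}) := by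
          rintro Y ⟨hYmem, hYν⟩
          rcases hYmem with hY | hY
          · exact Set.mem_insert_of_mem _ ⟨⟨hY.1, hYν⟩, hY.2⟩
          · rw [Set.mem_setOf_eq] at hY
            rw [hY.1]
            exact Set.mem_insert _ _
        have h1 := Msr_mono hJsub
        have h2 := Msr_insert (X \ {b}) ((Φ \ ν) \ {X})
        have hXJ : X ∈ Φ \ ν := ⟨hXΦ, hXν⟩
        have h3 := Msr_diff hXJ
        have h4 : (X \ {b}).ncard + 1 = X.ncard :=
          Set.ncard_diff_singleton_add_one hb (Set.toFinite _)
        omega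
      exact Relation.ReflTransGen.head hstep (ih Φ' hsub' hne' hm')

lemma finer_of_parts_subset [Finite E] {ν γ : Set (Set E)}
    (hν : IsPartitionOf ν) (_hγne : ∀ D ∈ γ, D.Nonempty)
    (h : ∀ X ∈ ν, ∃ D ∈ γ, X ⊆ D) : Finer ν γ := by
  classical
  set stepRel : Set (Set E) → Set (Set E) → Prop := fun x y => DelStep x y ∨ SplitStep x y
    with hstepRel
  set Φ : Set (Set E) → Set (Set E) := fun T => (γ \ T) ∪ PiecesOf ν T with hΦ
  -- the trace of a nonempty set is a partition of it
  have htrace : ∀ D : Set E, D ∈ γ → (∀ X ∈ TraceOf ν D, X.Nonempty) ∧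
      (TraceOf ν D).PairwiseDisjoint id ∧ ⋃₀ TraceOf ν D = D := by
    intro D hD
    refine ⟨?_, ?_, ?_⟩
    · rintro X ⟨G, hG, rfl, hne⟩; exact hne
    · rintro X ⟨G, hG, rfl, hne⟩ Y ⟨G', hG', rfl, hne'⟩ hXY
      have hGG' : G ≠ G' := by rintro rfl; exact hXY rfl
      have := hν.2.1 hG hG' hGG'
      exact Set.disjoint_of_subset Set.inter_subset_left Set.inter_subset_left this
    · apply Set.Subset.antisymm
      · rintro x ⟨X, ⟨G, hG, rfl, hne⟩, hx⟩; exact hx.2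
      · intro x hx
        have : x ∈ ⋃₀ ν := by rw [hν.2.2]; trivial
        obtain ⟨G, hG, hxG⟩ := this
        exact ⟨G ∩ D, ⟨G, hG, rfl, ⟨x, hxG, hx⟩⟩, hxG, hx⟩
  -- pieces are nested within parts of ν
  have hpieces_insert : ∀ (T : Set (Set E)) (D : Set E),
      PiecesOf ν (insert D T) = PiecesOf ν T ∪ TraceOf ν D := by
    intro T D
    ext X
    constructor
    · rintro ⟨D', hD', G, hG, rfl, hne⟩
      rcases hD' with rfl | hD'
      · exact Or.inr ⟨G, hG, rfl, hne⟩
      · exact Or.inl ⟨D', hD', G, hG, rfl, hne⟩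
    · rintro (⟨D', hD', G, hG, rfl, hne⟩ | ⟨G, hG, rfl, hne⟩)
      · exact ⟨D', Set.mem_insert_of_mem _ hD', G, hG, rfl, hne⟩
      · exact ⟨D, Set.mem_insert _ _, G, hG, rfl, hne⟩
  -- one splitting step
  have hstep : ∀ (T : Set (Set E)), ∀ D ∈ γ \ T,
      Relation.ReflTransGen stepRel (Φ T) (Φ (insert D T)) := by
    intro T D hD
    by_cases hDp : D ∈ PiecesOf ν T
    · -- the families coincide
      have htr : TraceOf ν D = {D} := by
        obtain ⟨D', hD', G, hG, hDeq, hne⟩ := hDp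
        have hDG : D ⊆ G := hDeq ▸ Set.inter_subset_left
        ext X
        constructor
        · rintro ⟨G', hG', rfl, hne'⟩
          have hGG' : G' = G := by
            by_contra hcon
            obtain ⟨x, hx⟩ := hne'
            exact absurd (hDG hx.2)
              (Set.disjoint_left.mp (hν.2.1 hG' hG hcon) hx.1)
          subst hGG'
          simp only [Set.mem_singleton_iff]
          apply Set.Subset.antisymm Set.inter_subset_right
          intro x hx
          exact ⟨hDG hx, hx⟩
        · rintro rfl
          exact ⟨G, hG, (Set.inter_eq_right.mpr hDG).symm, hne⟩
      have : Φ (insert D T) = Φ T := by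
        rw [hΦ]
        simp only
        rw [hpieces_insert, htr]
        ext X
        simp only [Set.mem_union, Set.mem_diff, Set.mem_insert_iff, Set.mem_singleton_iff]
        have e1 : X = D → X ∈ PiecesOf ν T := fun h => h ▸ hDp
        tauto
      rw [this]
    · -- genuine split step
      apply Relation.ReflTransGen.single
      right
      refine ⟨D, Or.inl hD, TraceOf ν D, (htrace D hD.1).1, (htrace D hD.1).2.1,
        (htrace D hD.1).2.2, ?_⟩
      rw [hΦ]
      simp only
      rw [hpieces_insert]
      ext X
      simp only [Set.mem_union, Set.mem_diff, Set.mem_insert_iff, Set.mem_singleton_iff]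
      have e1 : X ∈ PiecesOf ν T → X ≠ D := fun hp he => hDp (he ▸ hp)
      tauto
  -- phase 1: split everything
  have phase1 : ∀ (k : ℕ) (T : Set (Set E)), T ⊆ γ → (γ \ T).ncard ≤ k →
      Relation.ReflTransGen stepRel (Φ T) (Φ γ) := by
    intro k
    induction k with
    | zero =>
      intro T hT hc
      have h0 : γ \ T = ∅ := by rw [← Set.ncard_eq_zero (Set.toFinite _)]; omega
      have : T = γ := Set.Subset.antisymm hT (Set.diff_eq_empty.mp h0)
      rw [this]
    | succ k ih =>
      intro T hT hc
      by_cases h0 : γ \ T = ∅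
      · have : T = γ := Set.Subset.antisymm hT (Set.diff_eq_empty.mp h0)
        rw [this]
      · obtain ⟨D, hD⟩ := Set.nonempty_iff_ne_empty.mpr h0
        refine Relation.ReflTransGen.trans (hstep T D hD) (ih (insert D T) ?_ ?_)
        · exact Set.insert_subset hD.1 hT
        · have hss : γ \ insert D T ⊂ γ \ T := by
            constructor
            · rintro X ⟨h1, h2⟩
              exact ⟨h1, fun h => h2 (Or.inr h)⟩
            · intro hcon
              have := hcon hD
              exact this.2 (Or.inl rfl)
          have := Set.ncard_lt_ncard hss (Set.toFinite _)
          omega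
  -- assemble
  have hΦ0 : Φ ∅ = γ := by
    rw [hΦ]
    simp only [Set.diff_empty]
    have : PiecesOf ν (∅ : Set (Set E)) = ∅ := by
      ext X
      simp only [PiecesOf, Set.mem_setOf_eq, Set.mem_empty_iff_false, iff_false]
      rintro ⟨D, hD, _⟩
      exact hD
    rw [this, Set.union_empty]
  have hΦγ : Φ γ = PiecesOf ν γ := by
    rw [hΦ]
    simp only [Set.diff_self, Set.empty_union]
  have hνsub : ν ⊆ PiecesOf ν γ := by
    intro G hG
    obtain ⟨D, hD, hGD⟩ := h G hG
    exact ⟨D, hD, G, hG, (Set.inter_eq_left.mpr hGD).symm, hν.1 G hG⟩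
  have hpne : ∀ X ∈ PiecesOf ν γ, X.Nonempty := by
    rintro X ⟨D, hD, G, hG, rfl, hne⟩
    exact hne
  have hphase2 : Relation.ReflTransGen DelStep (PiecesOf ν γ) ν :=
    delsteps_to_target (Msr (PiecesOf ν γ \ ν)) (PiecesOf ν γ) hνsub hpne (le_refl _)
  have h1 : Relation.ReflTransGen stepRel (Φ ∅) (Φ γ) :=
    phase1 ((γ \ (∅ : Set (Set E))).ncard) ∅ (Set.empty_subset _) (le_refl _)
  rw [hΦ0] at h1
  have h2 : Relation.ReflTransGen stepRel (Φ γ) ν := by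
    rw [hΦγ]
    exact Relation.ReflTransGen.mono (fun x y hxy => Or.inl hxy) _ _ hphase2
  exact Relation.ReflTransGen.trans h1 h2

end FinerLemma

section Final

variable {P : Set (Set (Set E))}

lemma refining_of_pushing [Finite E] (hP : ∀ μ ∈ P, IsPartitionOf μ) (hpush : Pushing P) :
    Refining {μ | MergeClosure P μ} := by
  intro α β A B hA hB hQA hQB hAB
  obtain ⟨lam, hlam, hsub⟩ := weakRefine hP hpush hQA hQB hA hB hAB
  refine ⟨lam, hlam, ?_⟩
  apply finer_of_parts_subset (mc_partition hP hlam) ?_ hsub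
  rintro D (hD | hD)
  · exact (mc_partition hP hQA).1 D (Set.mem_insert_of_mem _ hD)
  · exact (mc_partition hP hQB).1 D (Set.mem_insert_of_mem _ hD)

lemma dualising_of_pushing [Finite E] (hP : ∀ μ ∈ P, IsPartitionOf μ) (hpush : Pushing P) :
    Dualising {μ | MergeClosure P μ} := by
  classical
  intro S hS
  by_cases hex : ∃ μ, MergeClosure P μ ∧ ∀ X ∈ μ, X ∈ S
  · obtain ⟨μ, h1, h2⟩ := hex
    exact Or.inl ⟨μ, h1, h2⟩
  · right
    set 𝒞 : Set (Set (Set E)) :=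
      {T | DownClosed T ∧ S ⊆ T ∧ ¬ ∃ μ, MergeClosure P μ ∧ ∀ X ∈ μ, X ∈ T} with h𝒞
    have hS𝒞 : S ∈ 𝒞 := ⟨hS, subset_rfl, hex⟩
    obtain ⟨T, hT𝒞, hTmax⟩ := Set.Finite.exists_maximalFor id 𝒞 (Set.toFinite _) ⟨S, hS𝒞⟩
    simp only [id] at hTmax
    replace hTmax : ∀ T' ∈ 𝒞, T ⊆ T' → T = T' := fun T' h1 h2 => le_antisymm h2 (hTmax h1 h2)
    obtain ⟨hTdc, hTS, hTno⟩ := hT𝒞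
    -- the empty set is small
    have hempT : (∅ : Set E) ∈ T := by
      have hT' : insert (∅ : Set E) T ∈ 𝒞 := by
        refine ⟨?_, hTS.trans (Set.subset_insert _ _), ?_⟩
        · rintro X (rfl | hX) Y hY
          · exact Or.inl (Set.subset_empty_iff.mp hY)
          · exact Or.inr (hTdc X hX Y hY)
        · rintro ⟨μ, hμ, hμs⟩
          apply hTno
          refine ⟨μ, hμ, fun X hX => ?_⟩
          rcases hμs X hX with h | hXT
          · exfalso
            have hne := (mc_partition hP hμ).1 X hX
            rw [h] at hne
            exact Set.not_nonempty_empty hne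
          · exact hXT
      have := hTmax _ hT' (Set.subset_insert _ _)
      rw [this]
      exact Set.mem_insert _ _
    -- for any non-small Z there is an almost-small partition
    have halmost : ∀ Z : Set E, Z ∉ T →
        ∃ μ, MergeClosure P μ ∧ ∀ X ∈ μ, X ∈ T ∨ X ⊆ Z := by
      intro Z hZ
      by_contra hcon
      push_neg at hcon
      have hT' : T ∪ {W | W ⊆ Z} ∈ 𝒞 := by
        refine ⟨?_, hTS.trans Set.subset_union_left, ?_⟩
        · rintro X (hX | hX) Y hY
          · exact Or.inl (hTdc X hX Y hY)
          · exact Or.inr (hY.trans hX)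
        · rintro ⟨μ, hμ, hμs⟩
          obtain ⟨X, hXμ, hXT, hXZ⟩ := hcon μ hμ
          rcases hμs X hXμ with h | h
          exacts [hXT h, hXZ h]
      have heq := hTmax _ hT' Set.subset_union_left
      apply hZ
      rw [heq]
      exact Or.inr (subset_rfl : Z ⊆ Z)
    -- key claim: any two non-small sets meet
    have key : ∀ (n : ℕ) (X Y : Set E), X ∉ T → Y ∉ T → X ∩ Y = ∅ →
        X.ncard + Y.ncard ≤ n → False := by
      intro n
      induction n using Nat.strong_induction_on with
      | _ n ihn =>
      intro X Y hX hY hXY hc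
      obtain ⟨μ₁, hμ₁, hμ₁s⟩ := halmost X hX
      obtain ⟨μ₂, hμ₂, hμ₂s⟩ := halmost Y hY
      have hbig₁ : ∃ A ∈ μ₁, A ∉ T := by
        by_contra hcon
        push_neg at hcon
        exact hTno ⟨μ₁, hμ₁, hcon⟩
      have hbig₂ : ∃ B ∈ μ₂, B ∉ T := by
        by_contra hcon
        push_neg at hcon
        exact hTno ⟨μ₂, hμ₂, hcon⟩
      obtain ⟨A, hAμ, hAT⟩ := hbig₁
      obtain ⟨B, hBμ, hBT⟩ := hbig₂
      have hAX : A ⊆ X := by rcases hμ₁s A hAμ with h | h; exacts [absurd h hAT, h]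
      have hBY : B ⊆ Y := by rcases hμ₂s B hBμ with h | h; exacts [absurd h hBT, h]
      have hABd : A ∩ B = ∅ := by
        apply Set.eq_empty_of_subset_empty
        rw [← hXY]
        exact Set.inter_subset_inter hAX hBY
      by_cases hAeX : A = X
      · by_cases hBeY : B = Y
        · -- the refinement contradiction
          subst hAeX; subst hBeY
          have hXα : A ∉ μ₁ \ {A} := fun h => h.2 rfl
          have hYβ : B ∉ μ₂ \ {B} := fun h => h.2 rfl
          have hμ₁e : insert A (μ₁ \ {A}) = μ₁ := by
            rw [Set.insert_diff_singleton]
            exact Set.insert_eq_self.mpr hAμ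
          have hμ₂e : insert B (μ₂ \ {B}) = μ₂ := by
            rw [Set.insert_diff_singleton]
            exact Set.insert_eq_self.mpr hBμ
          obtain ⟨lam, hlam, hlsub⟩ := weakRefine hP hpush
            (show MergeClosure P (insert A (μ₁ \ {A})) by rw [hμ₁e]; exact hμ₁)
            (show MergeClosure P (insert B (μ₂ \ {B})) by rw [hμ₂e]; exact hμ₂)
            hXα hYβ hABd
          apply hTno
          refine ⟨lam, hlam, fun Z hZ => ?_⟩
          obtain ⟨D, hD, hZD⟩ := hlsub Z hZ
          have hDT : D ∈ T := by
            rcases hD with ⟨hDμ, hDne⟩ | ⟨hDμ, hDne⟩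
            · rcases hμ₁s D hDμ with h | h
              · exact h
              · -- D ⊆ A, D ≠ A, both in μ₁ : D = ∅
                have hdisj := (mc_partition hP hμ₁).2.1 hDμ hAμ
                  (by simpa using hDne)
                have : D = ∅ := by
                  apply Set.eq_empty_of_subset_empty
                  intro x hx
                  exact absurd (h hx) (Set.disjoint_left.mp hdisj hx)
                rw [this]; exact hempT
            · rcases hμ₂s D hDμ with h | h
              · exact h
              · have hdisj := (mc_partition hP hμ₂).2.1 hDμ hBμ
                  (by simpa using hDne)
                have : D = ∅ := by
                  apply Set.eq_empty_of_subset_empty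
                  intro x hx
                  exact absurd (h hx) (Set.disjoint_left.mp hdisj hx)
                rw [this]; exact hempT
          exact hTdc D hDT Z hZD
        · -- B ⊊ Y : recurse
          have hss : B ⊂ Y := Set.ssubset_iff_subset_ne.mpr ⟨hBY, hBeY⟩
          have hlt := Set.ncard_lt_ncard hss (Set.toFinite _)
          have hcA := Set.ncard_le_ncard hAX (Set.toFinite _)
          exact ihn (A.ncard + B.ncard) (by omega) A B hAT hBT hABd (le_refl _)
      · have hss : A ⊂ X := Set.ssubset_iff_subset_ne.mpr ⟨hAX, hAeX⟩
        have hlt := Set.ncard_lt_ncard hss (Set.toFinite _)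
        have hcB := Set.ncard_le_ncard hBY (Set.toFinite _)
        exact ihn (A.ncard + B.ncard) (by omega) A B hAT hBT hABd (le_refl _)
    -- the bramble
    refine ⟨{X | X ∉ T}, ⟨?_, ?_⟩, ?_⟩
    · intro X hX Y hY
      rw [Set.nonempty_iff_ne_empty]
      intro hcon
      exact key (X.ncard + Y.ncard) X Y hX hY hcon (le_refl _)
    · intro μ hμ
      by_contra hcon
      push_neg at hcon
      apply hTno
      refine ⟨μ, hμ, fun X hX => ?_⟩
      have := hcon X hX
      simpa using this
    · intro X hX hXS
      exact hX (hTS hXS)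

end Final


/-- if `P` is pushing then `P↑` is refining, and hence dualising. -/
theorem pushing_refining_dualising [Finite E]
    (P : Set (Set (Set E))) (hP : ∀ μ ∈ P, IsPartitionOf μ) (hpush : Pushing P) :
    Refining {μ | MergeClosure P μ} ∧ Dualising {μ | MergeClosure P μ} := by
  exact ⟨refining_of_pushing hP hpush, dualising_of_pushing hP hpush⟩
end

section
/- A set of partitions P of a finite set E is pushing if and only if there exists a weakly submodular partition function Ψ and k ∈ ℝ ∪ {+∞} such that P = {μ : Ψ(μ) ≤ k}. -/
open Set

variable {E : Type*}

lemma push_partition {α : Set (Set E)} {A F : Set E} (hA : A ∉ α)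
    (hp : IsPartitionOf (insert A α)) (hF : F.Nonempty) :
    IsPartitionOf (insert (A ∪ F) (RemoveF α F)) := by
  obtain ⟨hne, hdisj, hcov⟩ := hp
  refine ⟨?_, ?_, ?_⟩
  · rintro X (rfl | ⟨A', hA', rfl, hXne⟩)
    · exact hF.mono Set.subset_union_right
    · exact hXne
  · rintro X (rfl | ⟨A', hA', rfl, hXne⟩) Y (rfl | ⟨B', hB', rfl, hYne⟩) hXY
    · exact absurd rfl hXY
    · apply Set.disjoint_left.2
      rintro x (hx | hx) ⟨hx', hx''⟩
      · have hne' : A ≠ B' := fun h => hA (h ▸ hB')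
        exact (hdisj (Set.mem_insert _ _) (Set.mem_insert_of_mem _ hB')
          hne').le_bot ⟨hx, hx'⟩
      · exact hx'' hx
    · apply Set.disjoint_left.2
      rintro x ⟨hx', hx''⟩ (hx | hx)
      · have hne' : A ≠ A' := fun h => hA (h ▸ hA')
        exact (hdisj (Set.mem_insert_of_mem _ hA') (Set.mem_insert _ _)
          (fun h => hne' h.symm)).le_bot ⟨hx', hx⟩
      · exact hx'' hx
    · by_cases h : A' = B'
      · exact absurd (by rw [h]) hXY
      · exact (hdisj (Set.mem_insert_of_mem _ hA') (Set.mem_insert_of_mem _ hB')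
          (fun hh => h hh)).mono Set.diff_subset Set.diff_subset
  · apply Set.eq_univ_of_forall
    intro x
    by_cases hxF : x ∈ F
    · exact ⟨A ∪ F, Set.mem_insert _ _, Or.inr hxF⟩
    · have : x ∈ ⋃₀ insert A α := hcov ▸ Set.mem_univ x
      obtain ⟨X, hX, hxX⟩ := this
      rcases hX with hX | hX
      · exact ⟨A ∪ F, Set.mem_insert _ _, Or.inl (hX ▸ hxX)⟩
      · exact ⟨X \ F, Set.mem_insert_of_mem _ ⟨X, hX, rfl, ⟨x, hxX, hxF⟩⟩, hxX, hxF⟩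

/-- a set of partitions `P` is pushing iff it is the set of
partitions of value at most `k` of some weakly submodular partition function,
for some `k ∈ ℝ ∪ {+∞}`. -/
theorem pushing_iff_weaklySubmodular [Finite E]
    (P : Set (Set (Set E))) (hP : ∀ μ ∈ P, IsPartitionOf μ) :
    Pushing P ↔ ∃ Ψ : Set (Set E) → EReal, WeaklySubmodular Ψ ∧
      ∃ k : EReal, k ≠ ⊥ ∧ P = {μ | IsPartitionOf μ ∧ Ψ μ ≤ k} := by
  classical
  constructor
  · intro hpush
    refine ⟨fun μ => if μ ∈ P then (0 : EReal) else ⊤, ?_, 0, by simp, ?_⟩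
    · intro α β A B hA hB hpα hpβ hne
      by_cases h1 : insert A α ∈ P
      · by_cases h2 : insert B β ∈ P
        · obtain ⟨F, hFne, hFsub, hor⟩ := hpush α β A B hA hB h1 h2 hne
          refine ⟨F, hFne, hFsub, hor.imp (fun h => by simp [h1, h]) (fun h => by simp [h2, h])⟩
        · exact ⟨Aᶜ ∩ Bᶜ, hne, subset_rfl, Or.inr (by simp [h2])⟩
      · exact ⟨Aᶜ ∩ Bᶜ, hne, subset_rfl, Or.inl (by simp [h1])⟩
    · ext μ
      simp only [Set.mem_setOf_eq]
      constructor
      · intro h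
        exact ⟨hP μ h, by simp [h]⟩
      · rintro ⟨hpart, hv⟩
        by_cases h : μ ∈ P
        · exact h
        · simp [h] at hv
  · rintro ⟨Ψ, hΨ, k, hk, hPe⟩
    intro α β A B hA hB h1 h2 hne
    rw [hPe] at h1 h2
    obtain ⟨hp1, hv1⟩ := h1
    obtain ⟨hp2, hv2⟩ := h2
    obtain ⟨F, hFne, hFsub, hor⟩ := hΨ α β A B hA hB hp1 hp2 hne
    refine ⟨F, hFne, hFsub, hor.imp ?_ ?_⟩
    · intro h
      rw [hPe]
      exact ⟨push_partition hA hp1 hFne, h.trans hv1⟩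
    · intro h
      rw [hPe]
      exact ⟨push_partition hB hp2 hFne, h.trans hv2⟩
end

section
/- Every submodular partition function in the old (Amini et al.) sense is weakly submodular in the new sense: if for partitions (α|A), (B|β) there exists A ⊊ F ⊆ (B∖A)^c with Ψ(α|A) > Ψ(α∖F|A∪F), or Ψ(β|B) ≥ Ψ(β∖A^c|B∪A^c), then, provided A^c ∩ B^c ≠ ∅, there exists a nonempty F' ⊆ A^c ∩ B^c with Ψ(α|A) ≥ Ψ(α∖F'|A∪F') or Ψ(β|B) ≥ Ψ(β∖F'|B∪F'). -/
open Set

variable {E : Type*}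

/-- every submodular partition function in the old (Amini et al.)
sense is weakly submodular in the new sense. -/
theorem old_weak_implies_new_weak [Finite E]
    (Ψ : Set (Set E) → EReal)
    (α β : Set (Set E)) (A B : Set E) (hA : A ∉ α) (hB : B ∉ β)
    (hpa : IsPartitionOf (insert A α)) (hpb : IsPartitionOf (insert B β))
    (hover : (Aᶜ ∩ Bᶜ).Nonempty)
    (h : (∃ F, A ⊂ F ∧ F ⊆ (B \ A)ᶜ ∧
            Ψ (insert (A ∪ F) (RemoveF α F)) < Ψ (insert A α)) ∨
         Ψ (insert (B ∪ Aᶜ) (RemoveF β Aᶜ)) ≤ Ψ (insert B β)) :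
    ∃ F', F'.Nonempty ∧ F' ⊆ Aᶜ ∩ Bᶜ ∧
      (Ψ (insert (A ∪ F') (RemoveF α F')) ≤ Ψ (insert A α) ∨
       Ψ (insert (B ∪ F') (RemoveF β F')) ≤ Ψ (insert B β)) := by
  rcases h with ⟨F, hAF, hFB, hlt⟩ | hle
  · -- take F' = F \ A
    refine ⟨F \ A, ?_, ?_, Or.inl ?_⟩
    · rcases Set.exists_of_ssubset hAF with ⟨x, hxF, hxA⟩
      exact ⟨x, hxF, hxA⟩
    · intro x hx
      refine ⟨hx.2, fun hxB => hx.2 ?_⟩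
      have := hFB hx.1
      simp only [Set.mem_compl_iff, Set.mem_diff, not_and, not_not] at this
      exact this hxB
    · have hsub : A ⊆ F := hAF.1
      have hAuF : A ∪ (F \ A) = A ∪ F := by
        exact Set.union_diff_self
      have hdisj : ∀ X ∈ α, X ∩ A = ∅ := by
        intro X hX
        have hne : A ≠ X := fun e => hA (e ▸ hX)
        have := hpa.2.1 (Set.mem_insert A α) (Set.mem_insert_of_mem _ hX) hne
        have := Set.disjoint_iff_inter_eq_empty.mp this.symm
        exact this
      have hrem : RemoveF α (F \ A) = RemoveF α F := by
        unfold RemoveF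
        ext X
        constructor
        · rintro ⟨Y, hY, rfl, hne⟩
          have h1 : Y \ (F \ A) = Y \ F := by
            have := hdisj Y hY
            ext x
            simp only [Set.mem_diff, Set.mem_inter_iff] at *
            constructor
            · rintro ⟨hxY, hx⟩
              refine ⟨hxY, fun hxF => hx ⟨hxF, fun hxA => ?_⟩⟩
              have : x ∈ Y ∩ A := ⟨hxY, hxA⟩
              simp [hdisj Y hY] at this
            · rintro ⟨hxY, hxF⟩
              exact ⟨hxY, fun h' => hxF h'.1⟩
          exact ⟨Y, hY, h1.symm ▸ rfl, h1 ▸ hne⟩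
        · rintro ⟨Y, hY, rfl, hne⟩
          have h1 : Y \ (F \ A) = Y \ F := by
            ext x
            simp only [Set.mem_diff] at *
            constructor
            · rintro ⟨hxY, hx⟩
              refine ⟨hxY, fun hxF => hx ⟨hxF, fun hxA => ?_⟩⟩
              have : x ∈ Y ∩ A := ⟨hxY, hxA⟩
              simp [hdisj Y hY] at this
            · rintro ⟨hxY, hxF⟩
              exact ⟨hxY, fun h' => hxF h'.1⟩
          exact ⟨Y, hY, h1.symm, h1.symm ▸ hne⟩
      rw [hAuF, hrem]
      exact hlt.le
  · -- take F' = Aᶜ ∩ Bᶜ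
    refine ⟨Aᶜ ∩ Bᶜ, hover, Set.Subset.rfl, Or.inr ?_⟩
    have hdisj : ∀ X ∈ β, X ∩ B = ∅ := by
      intro X hX
      have hne : B ≠ X := fun e => hB (e ▸ hX)
      have := hpb.2.1 (Set.mem_insert B β) (Set.mem_insert_of_mem _ hX) hne
      exact Set.disjoint_iff_inter_eq_empty.mp this.symm
    have hBu : B ∪ (Aᶜ ∩ Bᶜ) = B ∪ Aᶜ := by
      ext x
      simp only [Set.mem_union, Set.mem_inter_iff, Set.mem_compl_iff]
      tauto
    have hrem : RemoveF β (Aᶜ ∩ Bᶜ) = RemoveF β Aᶜ := by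
      unfold RemoveF
      ext X
      have key : ∀ Y ∈ β, Y \ (Aᶜ ∩ Bᶜ) = Y \ Aᶜ := by
        intro Y hY
        ext x
        simp only [Set.mem_diff, Set.mem_inter_iff, Set.mem_compl_iff]
        constructor
        · rintro ⟨hxY, hx⟩
          refine ⟨hxY, fun hxA => hx ⟨hxA, fun hxB => ?_⟩⟩
          have : x ∈ Y ∩ B := ⟨hxY, hxB⟩
          simp [hdisj Y hY] at this
        · rintro ⟨hxY, hxA⟩
          exact ⟨hxY, fun h' => hxA h'.1⟩
      constructor
      · rintro ⟨Y, hY, rfl, hne⟩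
        exact ⟨Y, hY, (key Y hY).symm ▸ rfl, key Y hY ▸ hne⟩
      · rintro ⟨Y, hY, rfl, hne⟩
        exact ⟨Y, hY, (key Y hY).symm, (key Y hY).symm ▸ hne⟩
    rw [hBu, hrem]
    exact hle
end

section
/- For every connectivity function f on a finite set E, the partition function max_f is weakly submodular: for all partitions (α|A) and (B|β) of E with A^c ∩ B^c ≠ ∅, there exists a nonempty F ⊆ A^c ∩ B^c such that max_f(α|A) ≥ max_f(α∖F|A∪F) or max_f(B|β) ≥ max_f(B∪F|β∖F). -/
open Set

variable {E : Type*}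

/-- From `a + b ≤ c + d` in `EReal`, one of `a ≤ c`, `b ≤ d` holds. -/
lemma ereal_le_or_le {a b c d : EReal} (h : a + b ≤ c + d) : a ≤ c ∨ b ≤ d := by
  by_contra hc
  push_neg at hc
  exact absurd (EReal.add_lt_add hc.1 hc.2) (not_lt.2 h)

/-- If `f A = ⊥`, `U ⊆ A` and `V ⊆ Aᶜ`, then `f U = ⊥` or `f V = ⊥`. -/
lemma kprime_bot {f : Set E → EReal} (hs : ∀ X, f X = f Xᶜ)
    (hsub : ∀ X Y, f (X ∪ Y) + f (X ∩ Y) ≤ f X + f Y)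
    {A U V : Set E} (hA : f A = ⊥) (hU : U ⊆ A) (hV : V ⊆ Aᶜ) :
    f U = ⊥ ∨ f V = ⊥ := by
  have hAc : f Aᶜ = ⊥ := by rw [← hs A]; exact hA
  have h := hsub Aᶜ (V ∪ (A \ U))
  have e1 : Aᶜ ∪ (V ∪ (A \ U)) = Uᶜ := by
    ext x
    have h1 := @hU x
    have h2 := @hV x
    simp only [Set.mem_union, Set.mem_compl_iff, Set.mem_diff] at *
    tauto
  have e2 : Aᶜ ∩ (V ∪ (A \ U)) = V := by
    ext x
    have h2 := @hV x
    simp only [Set.mem_inter_iff, Set.mem_union, Set.mem_compl_iff, Set.mem_diff] at *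
    tauto
  rw [e1, e2, hAc, EReal.bot_add] at h
  rw [← hs U] at h
  exact EReal.add_eq_bot_iff.mp (le_bot_iff.mp h)

/-- The degenerate case `f A = ⊥`: taking `F = Aᶜ ∩ Bᶜ` works on one of the two sides. -/
lemma botcase {f : Set E → EReal} (hs : ∀ X, f X = f Xᶜ)
    (hsub : ∀ X Y, f (X ∪ Y) + f (X ∩ Y) ≤ f X + f Y)
    {α β : Set (Set E)} {A B : Set E}
    (hdA : ∀ C ∈ α, C ∩ A = ∅) (hdB : ∀ C ∈ β, C ∩ B = ∅)
    (hA : f A = ⊥) :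
    maxPF f (insert (A ∪ (Aᶜ ∩ Bᶜ)) (RemoveF α (Aᶜ ∩ Bᶜ))) ≤ maxPF f (insert A α) ∨
    maxPF f (insert (B ∪ (Aᶜ ∩ Bᶜ)) (RemoveF β (Aᶜ ∩ Bᶜ))) ≤ maxPF f (insert B β) := by
  classical
  by_cases hall : ∀ C ∈ insert (B ∪ (Aᶜ ∩ Bᶜ)) (RemoveF β (Aᶜ ∩ Bᶜ)), f C = ⊥
  · right
    apply sSup_le
    rintro b ⟨C, hC, rfl⟩
    rw [hall C hC]
    exact bot_le
  · left
    push_neg at hall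
    obtain ⟨C, hC, hCne⟩ := hall
    -- produce `U ⊆ A` with `f U = f C`
    have hUex : ∃ U, U ⊆ A ∧ f U = f C := by
      rcases Set.mem_insert_iff.mp hC with rfl | hC'
      · refine ⟨(B ∪ (Aᶜ ∩ Bᶜ))ᶜ, ?_, (hs _).symm⟩
        intro x hx
        simp only [Set.mem_compl_iff, Set.mem_union, Set.mem_inter_iff] at hx
        push_neg at hx
        by_contra hxA
        exact hx.1 (hx.2 hxA)
      · obtain ⟨D, hD, rfl, hne⟩ := hC'
        refine ⟨D \ (Aᶜ ∩ Bᶜ), ?_, rfl⟩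
        intro x hx
        obtain ⟨hxD, hx2⟩ := hx
        have hxB : x ∉ B := fun hB =>
          (Set.eq_empty_iff_forall_notMem.mp (hdB D hD)) x ⟨hxD, hB⟩
        simp only [Set.mem_inter_iff, Set.mem_compl_iff] at hx2
        push_neg at hx2
        by_contra hxA
        exact hxB (hx2 hxA)
    obtain ⟨U, hU, hUval⟩ := hUex
    apply sSup_le
    rintro a ⟨X, hX, rfl⟩
    -- produce `V ⊆ Aᶜ` with `f V = f X`
    have hVex : ∃ V, V ⊆ Aᶜ ∧ f V = f X := by
      rcases Set.mem_insert_iff.mp hX with rfl | hX'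
      · exact ⟨(A ∪ (Aᶜ ∩ Bᶜ))ᶜ, fun x hx hxA => hx (Or.inl hxA), (hs _).symm⟩
      · obtain ⟨D, hD, rfl, hne⟩ := hX'
        refine ⟨D \ (Aᶜ ∩ Bᶜ), ?_, rfl⟩
        intro x hx hxA
        exact (Set.eq_empty_iff_forall_notMem.mp (hdA D hD)) x ⟨hx.1, hxA⟩
    obtain ⟨V, hV, hVval⟩ := hVex
    rcases kprime_bot hs hsub hA hU hV with h | h
    · exact absurd (hUval.symm.trans h) hCne
    · rw [← hVval, h]
      exact bot_le

/-- The main (nondegenerate) case: if `f A` is real and `f (A ∪ F₀) ≤ f A`, then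
an appropriate nonempty `F ⊆ F₀` works on the `A`-side. -/
lemma keycase [Finite E] {f : Set E → EReal} (hs : ∀ X, f X = f Xᶜ)
    (hsub : ∀ X Y, f (X ∪ Y) + f (X ∩ Y) ≤ f X + f Y)
    {α : Set (Set E)} {A : Set E} (hd : ∀ C ∈ α, C ∩ A = ∅)
    {F₀ : Set E} (hF₀ : F₀.Nonempty)
    (hAbot : f A ≠ ⊥) (hAtop : f A ≠ ⊤)
    (hel : f (A ∪ F₀) ≤ f A) :
    ∃ F, F.Nonempty ∧ F ⊆ F₀ ∧
      maxPF f (insert (A ∪ F) (RemoveF α F)) ≤ maxPF f (insert A α) := by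
  classical
  -- choose a minimiser of `f (A ∪ ·)`, of minimal cardinality among minimisers
  obtain ⟨m, hm_mem, hm_min⟩ :=
    Set.exists_min_image {F : Set E | F.Nonempty ∧ F ⊆ F₀} (fun F => f (A ∪ F))
      (Set.toFinite _) ⟨F₀, hF₀, subset_rfl⟩
  obtain ⟨F, hF_mem, hF_min⟩ :=
    Set.exists_min_image {G : Set E | (G.Nonempty ∧ G ⊆ F₀) ∧ f (A ∪ G) = f (A ∪ m)}
      (fun G => G.ncard) (Set.toFinite _) ⟨m, hm_mem, rfl⟩
  obtain ⟨⟨hFne, hFF₀⟩, hFval⟩ := hF_mem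
  have hmin : ∀ G : Set E, G.Nonempty → G ⊆ F₀ → f (A ∪ F) ≤ f (A ∪ G) := by
    intro G h1 h2
    rw [hFval]
    exact hm_min G ⟨h1, h2⟩
  have hcard : ∀ G : Set E, G.Nonempty → G ⊆ F₀ → f (A ∪ G) = f (A ∪ F) →
      F.ncard ≤ G.ncard := by
    intro G h1 h2 h3
    exact hF_min G ⟨⟨h1, h2⟩, h3.trans hFval⟩
  have hAF : f (A ∪ F) ≤ f A := (hmin F₀ hF₀ subset_rfl).trans hel
  refine ⟨F, hFne, hFF₀, ?_⟩
  apply sSup_le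
  rintro b ⟨X, hX, rfl⟩
  have hAmem : f A ≤ sSup (f '' insert A α) := le_sSup ⟨A, Set.mem_insert _ _, rfl⟩
  rcases Set.mem_insert_iff.mp hX with rfl | hX'
  · exact hAF.trans hAmem
  obtain ⟨C, hC, rfl, hne⟩ := hX'
  have hCA : ∀ x, x ∈ A → x ∉ C := fun x hxA hxC =>
    (Set.eq_empty_iff_forall_notMem.mp (hd C hC)) x ⟨hxC, hxA⟩
  have hCS : f C ≤ sSup (f '' insert A α) :=
    le_sSup ⟨C, Set.mem_insert_of_mem _ hC, rfl⟩
  by_cases hFC : F ∩ C = ∅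
  · have hCF : C \ F = C := by
      ext x
      have hx : x ∈ F → x ∉ C := fun h1 h2 =>
        (Set.eq_empty_iff_forall_notMem.mp hFC) x ⟨h1, h2⟩
      simp only [Set.mem_diff]
      tauto
    rw [hCF]
    exact hCS
  · -- the key submodular inequality
    have key1 : f (C \ F) + f (A ∪ (F \ C)) ≤ f C + f (A ∪ F) := by
      have h1 := hsub Cᶜ (A ∪ F)
      have e1 : Cᶜ ∪ (A ∪ F) = Cᶜ ∪ F := by
        ext x
        have := hCA x
        simp only [Set.mem_union, Set.mem_compl_iff]
        tauto
      have e2 : Cᶜ ∩ (A ∪ F) = A ∪ (F \ C) := by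
        ext x
        have := hCA x
        simp only [Set.mem_inter_iff, Set.mem_compl_iff, Set.mem_union, Set.mem_diff]
        tauto
      have e3 : f (Cᶜ ∪ F) = f (C \ F) := by
        rw [hs (C \ F)]
        congr 1
        simp [Set.diff_eq, Set.compl_inter, compl_compl]
      have e4 : f Cᶜ = f C := (hs C).symm
      rw [e1, e2, e3, e4] at h1
      exact h1
    by_cases hFsub : F \ C = ∅
    · -- `F ⊆ C` : use cancellation (here `f A` is a real number)
      rw [hFsub, Set.union_empty] at key1
      have key2 : f (C \ F) + f A ≤ f C + f A :=
        key1.trans (add_le_add_right hAF _)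
      obtain ⟨r, hr⟩ : ∃ r : ℝ, f A = (r : EReal) :=
        ⟨(f A).toReal, (EReal.coe_toReal hAtop hAbot).symm⟩
      rw [hr] at key2
      exact ((EReal.addLECancellable_coe r).add_le_add_iff_right.mp key2).trans hCS
    · -- mixed case : strict minimality
      have hFC' : (F \ C).Nonempty := Set.nonempty_iff_ne_empty.mpr hFsub
      have hsubFC : F \ C ⊆ F₀ := Set.diff_subset.trans hFF₀
      have hlt : f (A ∪ F) < f (A ∪ (F \ C)) := by
        rcases lt_or_eq_of_le (hmin _ hFC' hsubFC) with h | h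
        · exact h
        · exfalso
          obtain ⟨x, hxF, hxC⟩ := Set.nonempty_iff_ne_empty.mpr hFC
          have hne2 : F \ C ≠ F := by
            intro h'
            rw [← h'] at hxF
            exact hxF.2 hxC
          have hss : F \ C ⊂ F := Set.ssubset_iff_subset_ne.mpr ⟨Set.diff_subset, hne2⟩
          exact absurd (Set.ncard_lt_ncard hss (Set.toFinite F))
            (not_lt.2 (hcard _ hFC' hsubFC h.symm))
      by_contra hcon
      push_neg at hcon
      have h2 : f C < f (C \ F) := lt_of_le_of_lt hCS hcon
      exact absurd (key1.trans_lt (EReal.add_lt_add h2 hlt)) (lt_irrefl _)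

/-- for every connectivity function `f`, the partition function
`max_f` is weakly submodular. -/
theorem maxPF_weaklySubmodular [Finite E]
    (f : Set E → EReal) (hf : ConnFn f) :
    WeaklySubmodular (maxPF f) := by
  classical
  obtain ⟨hs, hsub⟩ := hf
  intro α β A B hAα hBβ hpA hpB hne
  have hdA : ∀ C ∈ α, C ∩ A = ∅ := by
    intro C hC
    have hCA : C ≠ A := fun h => hAα (h ▸ hC)
    exact Set.disjoint_iff_inter_eq_empty.mp
      (hpA.2.1 (Set.mem_insert_of_mem _ hC) (Set.mem_insert _ _) hCA)
  have hdB : ∀ C ∈ β, C ∩ B = ∅ := by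
    intro C hC
    have hCB : C ≠ B := fun h => hBβ (h ▸ hC)
    exact Set.disjoint_iff_inter_eq_empty.mp
      (hpB.2.1 (Set.mem_insert_of_mem _ hC) (Set.mem_insert _ _) hCB)
  by_cases hAbot : f A = ⊥
  · exact ⟨Aᶜ ∩ Bᶜ, hne, subset_rfl, botcase hs hsub hdA hdB hAbot⟩
  by_cases hBbot : f B = ⊥
  · have h := botcase hs hsub hdB hdA hBbot
    rw [Set.inter_comm Bᶜ Aᶜ] at h
    exact ⟨Aᶜ ∩ Bᶜ, hne, subset_rfl, h.symm⟩
  by_cases hAtop : f A = ⊤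
  · refine ⟨Aᶜ ∩ Bᶜ, hne, subset_rfl, Or.inl ?_⟩
    have hStop : (⊤ : EReal) ≤ maxPF f (insert A α) :=
      hAtop ▸ le_sSup ⟨A, Set.mem_insert _ _, rfl⟩
    exact le_trans le_top hStop
  by_cases hBtop : f B = ⊤
  · refine ⟨Aᶜ ∩ Bᶜ, hne, subset_rfl, Or.inr ?_⟩
    have hStop : (⊤ : EReal) ≤ maxPF f (insert B β) :=
      hBtop ▸ le_sSup ⟨B, Set.mem_insert _ _, rfl⟩
    exact le_trans le_top hStop
  -- nondegenerate case
  have e1 : A ∪ (Aᶜ ∩ Bᶜ) = A ∪ Bᶜ := by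
    ext x
    simp only [Set.mem_union, Set.mem_inter_iff, Set.mem_compl_iff]
    tauto
  have e2 : f (B ∪ (Aᶜ ∩ Bᶜ)) = f (A ∩ Bᶜ) := by
    rw [hs (B ∪ (Aᶜ ∩ Bᶜ))]
    congr 1
    ext x
    simp only [Set.mem_compl_iff, Set.mem_union, Set.mem_inter_iff]
    tauto
  have hsum : f (A ∪ (Aᶜ ∩ Bᶜ)) + f (B ∪ (Aᶜ ∩ Bᶜ)) ≤ f A + f B := by
    rw [e1, e2]
    have h := hsub A Bᶜ
    rwa [← hs B] at h
  rcases ereal_le_or_le hsum with hel | hel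
  · obtain ⟨F, h1, h2, h3⟩ := keycase hs hsub hdA hne hAbot hAtop hel
    exact ⟨F, h1, h2, Or.inl h3⟩
  · obtain ⟨F, h1, h2, h3⟩ := keycase hs hsub hdB hne hBbot hBtop hel
    exact ⟨F, h1, h2, Or.inr h3⟩
end

section
/- Let Q be a set of partitions of E containing no small partition for a given downward-closed family S. If Br is an inclusion-wise minimal upward-closed family of big subsets of E that contains a big part of every partition in Q, and Q is refining, then the elements of Br pairwise intersect (so Br is a big Q-bramble). -/
open Set

variable {E : Type*}

/-- Every part of a finer partition is contained in some part of the original. -/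
lemma finer_parts {α β : Set (Set E)} (h : Finer α β) :
    ∀ P ∈ α, ∃ B ∈ β, P ⊆ B := by
  unfold Finer at h
  induction h with
  | refl => exact fun P hP => ⟨P, hP, subset_rfl⟩
  | tail _ step ih =>
    intro P hP
    rcases step with hdel | hsplit
    · obtain ⟨B, hB, b, _, rfl⟩ := hdel
      rcases hP with hP | hP
      · exact ih P hP.1
      · obtain ⟨rfl, -⟩ := hP
        obtain ⟨G, hG, hBG⟩ := ih B hB
        exact ⟨G, hG, diff_subset.trans hBG⟩
    · obtain ⟨B, hB, δ, _, _, hδB, rfl⟩ := hsplit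
      rcases hP with hP | hP
      · exact ih P hP.1
      · obtain ⟨G, hG, hBG⟩ := ih B hB
        exact ⟨G, hG, (hδB ▸ subset_sUnion_of_mem hP).trans hBG⟩

/-- if `Q` is refining and has no small partition, any
inclusion-wise minimal upward-closed family of big sets meeting every
partition of `Q` is pairwise intersecting (hence a big `Q`-bramble). -/
theorem minimal_upclosed_is_bramble [Finite E]
    (Q : Set (Set (Set E))) (hQ : ∀ μ ∈ Q, IsPartitionOf μ)
    (S : Set (Set E)) (hS : DownClosed S)
    (hnosmall : ¬∃ μ ∈ Q, ∀ X ∈ μ, X ∈ S)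
    (href : Refining Q)
    (Br : Set (Set E))
    (hbig : ∀ X ∈ Br, X ∉ S)
    (hup : ∀ X ∈ Br, ∀ Y, X ⊆ Y → Y ∈ Br)
    (hmeets : ∀ μ ∈ Q, ∃ X ∈ μ, X ∈ Br)
    (hmin : ∀ Br', Br' ⊆ Br → (∀ X ∈ Br', X ∉ S) →
      (∀ X ∈ Br', ∀ Y, X ⊆ Y → Y ∈ Br') →
      (∀ μ ∈ Q, ∃ X ∈ μ, X ∈ Br') → Br' = Br) :
    ∀ X ∈ Br, ∀ Y ∈ Br, (X ∩ Y).Nonempty := by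
  -- For a minimal element X of Br, there is a partition in Q whose unique part in Br is X.
  have key : ∀ X ∈ Br, (∀ Z ∈ Br, Z ⊆ X → Z = X) →
      ∃ μ ∈ Q, X ∈ μ ∧ ∀ P ∈ μ, P ∈ Br → P = X := by
    intro X hX hXmin
    by_contra hcon
    push_neg at hcon
    have hmeet' : ∀ μ ∈ Q, ∃ P ∈ μ, P ∈ Br \ {X} := by
      intro μ hμ
      obtain ⟨P, hPμ, hPBr⟩ := hmeets μ hμ
      by_cases hPX : P = X
      · subst hPX
        obtain ⟨P', hP'μ, hP'Br, hP'ne⟩ := hcon μ hμ hPμ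
        exact ⟨P', hP'μ, hP'Br, hP'ne⟩
      · exact ⟨P, hPμ, hPBr, hPX⟩
    have : Br \ {X} = Br := by
      refine hmin (Br \ {X}) diff_subset (fun Z hZ => hbig Z hZ.1) ?_ hmeet'
      intro Z hZ W hZW
      refine ⟨hup Z hZ.1 W hZW, ?_⟩
      rintro rfl
      exact hZ.2 (hXmin Z hZ.1 hZW)
    rw [← this] at hX
    exact hX.2 rfl
  intro X hX Y hY
  by_contra hXY
  rw [Set.not_nonempty_iff_eq_empty] at hXY
  -- shrink X and Y to minimal elements of Br
  have hmin_elt : ∀ W ∈ Br, ∃ W' ∈ Br, W' ⊆ W ∧ ∀ Z ∈ Br, Z ⊆ W' → Z = W' := by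
    intro W hW
    have hfin : ({Z ∈ Br | Z ⊆ W} : Set (Set E)).Finite := Set.toFinite _
    obtain ⟨W', hW', hWmin⟩ :=
      (by obtain ⟨a, ha⟩ := hfin.exists_minimal ⟨W, hW, subset_rfl⟩
          exact ⟨a, ha.prop, fun b hb hba => (ha.eq_of_le hb hba).symm⟩ :
        ∃ a ∈ ({Z ∈ Br | Z ⊆ W} : Set (Set E)), ∀ b ∈ ({Z ∈ Br | Z ⊆ W} : Set (Set E)), b ⊆ a → a = b)
    exact ⟨W', hW'.1, hW'.2, fun Z hZ hZW' =>
      (hWmin Z ⟨hZ, hZW'.trans hW'.2⟩ hZW').symm⟩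
  obtain ⟨X', hX'Br, hX'X, hX'min⟩ := hmin_elt X hX
  obtain ⟨Y', hY'Br, hY'Y, hY'min⟩ := hmin_elt Y hY
  have hdisj : X' ∩ Y' = ∅ :=
    Set.eq_empty_of_subset_empty (hXY ▸ Set.inter_subset_inter hX'X hY'Y)
  obtain ⟨μ, hμQ, hX'μ, hμuniq⟩ := key X' hX'Br hX'min
  obtain ⟨ν, hνQ, hY'ν, hνuniq⟩ := key Y' hY'Br hY'min
  have hμeq : insert X' (μ \ {X'}) = μ := by
    rw [Set.insert_diff_singleton, Set.insert_eq_self.mpr hX'μ]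
  have hνeq : insert Y' (ν \ {Y'}) = ν := by
    rw [Set.insert_diff_singleton, Set.insert_eq_self.mpr hY'ν]
  obtain ⟨ρ, hρQ, hρfine⟩ :=
    href (μ \ {X'}) (ν \ {Y'}) X' Y' (fun h => h.2 rfl) (fun h => h.2 rfl)
      (hμeq.symm ▸ hμQ) (hνeq.symm ▸ hνQ) hdisj
  obtain ⟨P, hPρ, hPBr⟩ := hmeets ρ hρQ
  obtain ⟨G, hG, hPG⟩ := finer_parts hρfine P hPρ
  have hGBr : G ∈ Br := hup P hPBr G hPG
  rcases hG with hG | hG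
  · exact hG.2 (hμuniq G hG.1 hGBr)
  · exact hG.2 (hνuniq G hG.1 hGBr)
end
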